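/- arXiv:1909.06898 — 3 statements merged into one kernel-verified Lean document; each statement's English description precedes it below -/
import Mathlib

section
/- Let f, g ∈ K[x,y] be nonzero polynomials with deg_y(f) < deg_y(g), and suppose g = g_1^{e_1} ⋯ g_m^{e_m} with positive integers e_i and g_1,…,g_m ∈ K[x,y] pairwise coprime. Then there exist a nonzero u ∈ K[x] and polynomials f_{ij} ∈ K[x,y] for 1 ≤ i ≤ m, 1 ≤ j ≤ e_i, such that f/g = (1/u)(Σ_{i=1}^{m} Σ_{j=1}^{e_i} f_{ij}/g_i^{j}), with deg_x(u) ≤ deg_x(g) deg_y(g) − Σ_{i=1}^{m} (e_i(1+e_i)/2) deg_x(g_i) deg_y(g_i), and for all i, j: deg_x(f_{ij}) ≤ deg_x(g) deg_y(g) + deg_x(f) − deg_x(g) + j·deg_x(g_i) and deg_y(f_{ij}) ≤ deg_y(g_i) − 1. -/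
open Polynomial BigOperators

noncomputable section

/-- The shift automorphism `X ↦ X + 1` of a polynomial ring. -/
def shiftPoly (A : Type*) [CommRing A] : Polynomial A ≃ₐ[A] Polynomial A :=
  AlgEquiv.ofAlgHom (aeval (X + 1)) (aeval (X - 1))
    (by apply algHom_ext; simp) (by apply algHom_ext; simp)

variable (K : Type*) [Field K] [CharZero K]

/-- `K[x,y]` modelled as `K[x][y]`: the inner variable is `x`, the outer one is `y`. -/
abbrev Rxy := Polynomial (Polynomial K)

/-- The rational function field `K(x,y)`, as the fraction field of `K[x][y]`. -/
abbrev Fxy := FractionRing (Rxy K)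

/-- The shift `x ↦ x + 1` on `K[x]`. -/
def σxK : RingAut (Polynomial K) := (shiftPoly K).toRingEquiv

/-- The shift `x ↦ x + 1` on `K[x,y]`. -/
def σxR : RingAut (Rxy K) := mapEquiv (shiftPoly K).toRingEquiv

/-- The shift `y ↦ y + 1` on `K[x,y]`. -/
def σyR : RingAut (Rxy K) := (shiftPoly (Polynomial K)).toRingEquiv

/-- The shift `σ_x` on `K(x,y)`. -/
def σxF : RingAut (Fxy K) := IsFractionRing.ringEquivOfRingEquiv (σxR K)

/-- The shift `σ_y` on `K(x,y)`. -/
def σyF : RingAut (Fxy K) := IsFractionRing.ringEquivOfRingEquiv (σyR K)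

/-- The canonical map `K[x,y] → K(x,y)`. -/
def ι₀ : Rxy K →+* Fxy K := algebraMap (Rxy K) (Fxy K)

/-- The canonical map `K[x] → K(x,y)`. -/
def ιx₀ : Polynomial K →+* Fxy K := (ι₀ K).comp (Polynomial.C : Polynomial K →+* Rxy K)

/-- The canonical map `K → K(x,y)`. -/
def ιK : K →+* Fxy K := (ιx₀ K).comp (Polynomial.C : K →+* Polynomial K)

/-- The element `x` of `K(x,y)`. -/
def xF : Fxy K := ιx₀ K X

/-- The element `y` of `K(x,y)`. -/
def yF : Fxy K := ι₀ K X

/-- A rational function `f ∈ K(x,y)` is `σ_y`-summable if `f = σ_y(g) - g`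
for some `g ∈ K(x,y)`. -/
def IsSummableY (f : Fxy K) : Prop := ∃ g : Fxy K, f = σyF K g - g

/-- The Laurent operator ring `A = K(x,y)[S_x,S_y,S_x⁻¹,S_y⁻¹]`, an operator being
recorded by its (finitely supported) family of coefficients `a_{ij}` in
`L = Σ a_{ij} S_x^i S_y^j`. -/
abbrev OpA := (ℤ × ℤ) →₀ Fxy K

/-- The subring `A_{λ,μ} = K(x,y)[S_{λ,μ}, S_{λ,μ}⁻¹]`, an operator being recorded by its
(finitely supported) family of coefficients `a_i` in `M = Σ a_i S_{λ,μ}^i`. -/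
abbrev OpB := ℤ →₀ Fxy K

/-- The automorphism `σ_x^i σ_y^j` of `K(x,y)` attached to the monomial `S_x^i S_y^j`. -/
def σv (v : ℤ × ℤ) : RingAut (Fxy K) := σxF K ^ v.1 * σyF K ^ v.2

/-- Multiplication in `A`, determined by the commutation rule `S_x^i S_y^j f
= σ_x^i σ_y^j (f) S_x^i S_y^j`. -/
def mulA (L M : OpA K) : OpA K :=
  L.sum fun p a => M.sum fun q b => Finsupp.single (p + q) (a * σv K p b)

/-- The application of an operator `L = Σ a_{ij} S_x^i S_y^j ∈ A` to a rational function. -/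
def applyA (L : OpA K) (f : Fxy K) : Fxy K := L.sum fun p a => a * σv K p f

/-- The operator `S_y - 1 ∈ A`. -/
def SyOne : OpA K :=
  Finsupp.single ((0 : ℤ), (1 : ℤ)) (1 : Fxy K) - Finsupp.single ((0 : ℤ), (0 : ℤ)) (1 : Fxy K)

section TypeLamMu

/- `α`, `β` are the Bézout cofactors for the integer-linear type `(λ, μ)`,
so that `S_{λ,μ} = S_x^α S_y^β`. -/
variable (α β : ℤ)

/-- The automorphism `σ_{λ,μ} = σ_x^α σ_y^β` of `K(x,y)` attached to `S_{λ,μ} = S_x^α S_y^β`. -/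
def τF : RingAut (Fxy K) := σxF K ^ α * σyF K ^ β

/-- Multiplication in `A_{λ,μ}`. -/
def mulB (L M : OpB K) : OpB K :=
  L.sum fun i a => M.sum fun j b => Finsupp.single (i + j) (a * (τF K α β ^ i) b)

/-- The application of an operator `M = Σ a_i S_{λ,μ}^i ∈ A_{λ,μ}` to a rational function. -/
def applyB (M : OpB K) (f : Fxy K) : Fxy K := M.sum fun i a => a * (τF K α β ^ i) f

/-- The inclusion `A_{λ,μ} ⊆ A`, sending `S_{λ,μ}^k` to `S_x^{kα} S_y^{kβ}`. -/
def ιB (M : OpB K) : OpA K := Finsupp.mapDomain (fun k : ℤ => (k * α, k * β)) M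

/-- The left `K(x,y)`-linear map `φ_{λ,μ} : A → A_{λ,μ}`,
sending `Σ a_{ij} S_x^i S_y^j` to `Σ a_{ij} S_{λ,μ}^{iλ+jμ}`. -/
def φB (lam μ : ℤ) (L : OpA K) : OpB K :=
  Finsupp.mapDomain (fun p : ℤ × ℤ => p.1 * lam + p.2 * μ) L

/-- The left scalar multiplication `L ⊙ M = φ_{λ,μ}(L M)` of `L ∈ A` on `M ∈ A_{λ,μ}`. -/
def odot (lam μ : ℤ) (L : OpA K) (M : OpB K) : OpB K :=
  φB K lam μ (mulA K L (ιB K α β M))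

end TypeLamMu

/-- The lowest order `lord(M)` of a (nonzero) operator `M ∈ A_{λ,μ}`. -/
def lord (M : OpB K) : ℤ := WithTop.untopD 0 (M.support.min)

/-- The highest order `hord(M)` of a (nonzero) operator `M ∈ A_{λ,μ}`. -/
def hord (M : OpB K) : ℤ := WithBot.unbotD 0 (M.support.max)

/-- The inclusion `K(x,y)[S_y, S_y⁻¹] ⊆ A`. -/
def ιy (L : ℤ →₀ Fxy K) : OpA K := Finsupp.mapDomain (fun j : ℤ => ((0 : ℤ), j)) L

/-- The inclusion `K[x][S_x] ⊆ A`, for operators with polynomial coefficients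
supported on nonnegative powers of `S_x`. -/
def ιxOp (L : ℕ →₀ Polynomial K) : OpA K :=
  L.sum fun ℓ c => Finsupp.single ((ℓ : ℤ), (0 : ℤ)) (ιx₀ K c)

/-- A nonzero operator `L = Σ c_ℓ S_x^ℓ ∈ K[x][S_x]` is a telescoper for `f ∈ K(x,y)`
if `L(f)` is `σ_y`-summable. -/
def IsTelescoper (L : ℕ →₀ Polynomial K) (f : Fxy K) : Prop :=
  L ≠ 0 ∧ IsSummableY K (applyA K (ιxOp K L) f)

/-- The degree in `x` of a polynomial in `K[x,y] = K[x][y]`. -/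
def degX (r : Rxy K) : ℕ := r.support.sup fun n => (r.coeff n).natDegree

/-- The total degree in `x, y` of a polynomial in `K[x,y] = K[x][y]`. -/
def degXY (r : Rxy K) : ℕ := r.support.sup fun n => n + (r.coeff n).natDegree

end

noncomputable section

variable (K : Type*) [Field K] [CharZero K]

/-- The element `λx + μy` of `K(x,y)`. -/
def wF (lam μ : ℤ) : Fxy K := (lam : Fxy K) * xF K + (μ : Fxy K) * yF K

/-- The rational function `p(λx + μy) ∈ K(x,y)`, for a univariate polynomial `p ∈ K[z]`. -/
def peF (lam μ : ℤ) (p : Polynomial K) : Fxy K := Polynomial.eval₂ (ιK K) (wF K lam μ) p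

/-- The element `λx + μy` of `K[x,y]`. -/
def wR (lam μ : ℤ) : Rxy K :=
  (lam : Rxy K) * Polynomial.C Polynomial.X + (μ : Rxy K) * Polynomial.X

/-- The polynomial `p(λx + μy) ∈ K[x,y]`, for a univariate polynomial `p ∈ K[z]`. -/
def peR (lam μ : ℤ) (p : Polynomial K) : Rxy K :=
  Polynomial.eval₂ (algebraMap K (Rxy K)) (wR K lam μ) p

end

noncomputable section Aux11
namespace Aux11
open Polynomial Finset
set_option linter.unusedSectionVars false

lemma exists_coeff_ne_zero {A : Type*} [Semiring A] {p : Polynomial A} (h : p ≠ 0) :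
    ∃ n, p.coeff n ≠ 0 := by
  by_contra hall
  push_neg at hall
  exact h (Polynomial.ext fun n => by simp [hall n])

/-- Swap the two variables of `K[x][y]`. -/
def swapH (K : Type*) [CommSemiring K] : Polynomial (Polynomial K) →+* Polynomial (Polynomial K) :=
  eval₂RingHom (mapRingHom (C : K →+* Polynomial K)) (C X)

lemma coeff_swapH (K : Type*) [CommSemiring K] (r : Polynomial (Polynomial K)) (d n : ℕ) :
    ((swapH K r).coeff d).coeff n = (r.coeff n).coeff d := by
  induction r using Polynomial.induction_on' with
  | add p q hp hq => simp [hp, hq]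
  | monomial k a =>
      simp only [swapH, coe_eval₂RingHom, eval₂_monomial, coe_mapRingHom]
      rw [← C_pow, coeff_mul_C, coeff_map, coeff_C_mul, coeff_X_pow, coeff_monomial]
      by_cases h : k = n
      · simp [h]
      · rw [if_neg h, if_neg (fun hh => h hh.symm)]
        simp

variable {K : Type*} [Field K] [CharZero K]

lemma swapH_eq_zero_iff {r : Rxy K} : swapH (K := K) r = 0 ↔ r = 0 := by
  constructor
  · intro h
    ext n d
    have := coeff_swapH K r d n
    rw [h] at this
    simpa using this.symm
  · rintro rfl; simp

lemma coeff_natDegree_le_degX (r : Rxy K) (n : ℕ) : (r.coeff n).natDegree ≤ degX K r := by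
  by_cases h : n ∈ r.support
  · exact Finset.le_sup (f := fun n => (r.coeff n).natDegree) h
  · rw [Polynomial.notMem_support_iff.mp h, Polynomial.natDegree_zero]
    exact Nat.zero_le _

lemma natDegree_swapH (r : Rxy K) : (swapH (K := K) r).natDegree = degX K r := by
  apply le_antisymm
  · by_cases h : swapH (K := K) r = 0
    · simp [h]
    · obtain ⟨n, hn⟩ := exists_coeff_ne_zero (Polynomial.leadingCoeff_ne_zero.mpr h)
      rw [Polynomial.leadingCoeff, coeff_swapH] at hn
      exact (Polynomial.le_natDegree_of_ne_zero hn).trans (coeff_natDegree_le_degX r n)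
  · apply Finset.sup_le
    intro n hn
    have hc : r.coeff n ≠ 0 := Polynomial.mem_support_iff.mp hn
    have h2 : ((swapH (K := K) r).coeff ((r.coeff n).natDegree)).coeff n ≠ 0 := by
      rw [coeff_swapH]
      exact Polynomial.leadingCoeff_ne_zero.mpr hc
    have h3 : (swapH (K := K) r).coeff ((r.coeff n).natDegree) ≠ 0 :=
      fun hh => h2 (by rw [hh]; simp)
    exact Polynomial.le_natDegree_of_ne_zero h3

lemma degX_mul {a b : Rxy K} (ha : a ≠ 0) (hb : b ≠ 0) :
    degX K (a * b) = degX K a + degX K b := by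
  rw [← natDegree_swapH, ← natDegree_swapH, ← natDegree_swapH, map_mul]
  exact Polynomial.natDegree_mul (swapH_eq_zero_iff.ne.mpr ha) (swapH_eq_zero_iff.ne.mpr hb)

lemma degX_pow (a : Rxy K) (k : ℕ) : degX K (a ^ k) = k * degX K a := by
  rw [← natDegree_swapH, ← natDegree_swapH, map_pow]
  exact Polynomial.natDegree_pow _ _

lemma degX_X_pow (k : ℕ) : degX K ((X : Rxy K) ^ k) = 0 := by
  rw [degX_pow, ← natDegree_swapH]
  simp [swapH]





/-- Coefficients of `∑ k, C (a k) * X^k`. -/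
lemma coeff_finsum {A : Type*} [Semiring A] {d : ℕ} (a : Fin d → Polynomial A → Polynomial A) : True := trivial

lemma coeff_finsum' {A : Type*} [CommRing A] {d : ℕ} (a : Fin d → A) (n : ℕ) :
    (∑ k : Fin d, C (a k) * X ^ (k : ℕ)).coeff n = if h : n < d then a ⟨n, h⟩ else 0 := by
  rw [Polynomial.finset_sum_coeff]
  by_cases h : n < d
  · rw [dif_pos h]
    rw [Finset.sum_eq_single (⟨n, h⟩ : Fin d)]
    · simp
    · intro b _ hb
      rw [coeff_C_mul, coeff_X_pow, if_neg (fun hh => hb (Fin.ext hh.symm)), mul_zero]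
    · simp
  · rw [dif_neg h]
    apply Finset.sum_eq_zero
    intro k _
    rw [coeff_C_mul, coeff_X_pow, if_neg (fun hh => h (by rw [hh]; exact k.isLt)), mul_zero]

lemma degree_finsum_lt {A : Type*} [CommRing A] [Nontrivial A] {d : ℕ} (hd : 0 < d) (a : Fin d → A) :
    (∑ k : Fin d, C (a k) * X ^ (k : ℕ)).degree < ((d : ℕ) : WithBot ℕ) := by
  apply lt_of_le_of_lt (Polynomial.degree_sum_le _ _)
  rw [Finset.sup_lt_iff (by exact_mod_cast WithBot.bot_lt_coe d)]
  intro k _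
  apply lt_of_le_of_lt (Polynomial.degree_mul_le _ _)
  have h1 : (C (a k)).degree + ((X : Polynomial A) ^ (k:ℕ)).degree ≤ 0 + ((k : ℕ) : WithBot ℕ) :=
    add_le_add degree_C_le (le_of_eq (degree_X_pow _))
  rw [zero_add] at h1
  exact lt_of_le_of_lt h1 (by exact_mod_cast k.isLt)

/-- Uniqueness of base-`G` expansions. -/
lemma expansion_eq_zero {F : Type*} [Field F] {G : Polynomial F} (hG : G ≠ 0) :
    ∀ (e : ℕ) (Q : Fin e → Polynomial F), (∀ j, (Q j).degree < G.degree) →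
      (∑ j : Fin e, Q j * G ^ (e - 1 - (j : ℕ)) = 0) → ∀ j, Q j = 0 := by
  intro e
  induction e with
  | zero => intro Q _ _ j; exact absurd j.isLt (by omega)
  | succ e ih =>
      intro Q hdeg hsum j
      rw [Fin.sum_univ_castSucc] at hsum
      have hexp : ∀ j : Fin e, e + 1 - 1 - ((Fin.castSucc j : Fin (e+1)) : ℕ) = (e - 1 - (j:ℕ)) + 1 := by
        intro j; have := j.isLt; simp; omega
      have hsum2 : (∑ j : Fin e, Q (Fin.castSucc j) * G ^ (e - 1 - (j : ℕ))) * G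
          + Q (Fin.last e) = 0 := by
        rw [Finset.sum_mul, ← hsum]
        congr 1
        · apply Finset.sum_congr rfl
          intro j _
          rw [hexp j, pow_succ, mul_assoc]
        · simp
      set T := ∑ j : Fin e, Q (Fin.castSucc j) * G ^ (e - 1 - (j : ℕ)) with hT
      have hTzero : T = 0 := by
        by_contra hTne
        have hlast : Q (Fin.last e) = -(T * G) := by linear_combination hsum2
        have h1 : (Q (Fin.last e)).degree < G.degree := hdeg _
        rw [hlast, degree_neg, degree_mul] at h1
        have h2 : (0 : WithBot ℕ) ≤ T.degree := Polynomial.zero_le_degree_iff.mpr hTne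
        have h3 : G.degree ≤ T.degree + G.degree := le_add_of_nonneg_left h2
        exact absurd (lt_of_le_of_lt h3 h1) (lt_irrefl _)
      have hQlast : Q (Fin.last e) = 0 := by
        rw [hTzero, zero_mul, zero_add] at hsum2; exact hsum2
      have := ih (fun j => Q (Fin.castSucc j)) (fun j => hdeg _) hTzero
      rcases Fin.eq_castSucc_or_eq_last j with ⟨j', rfl⟩ | rfl
      · exact this j'
      · exact hQlast




/-- Degree bound for determinants with column-wise degree bounds. -/
lemma natDegree_det_le {n : Type*} [Fintype n] [DecidableEq n] {R : Type*} [CommRing R]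
    (M : Matrix n n (Polynomial R)) (b : n → ℕ) (h : ∀ s t, (M s t).natDegree ≤ b t) :
    M.det.natDegree ≤ ∑ t, b t := by
  rw [Matrix.det_apply']
  apply Polynomial.natDegree_sum_le_of_forall_le
  intro σ _
  apply le_trans (Polynomial.natDegree_mul_le)
  rw [Polynomial.natDegree_intCast, zero_add]
  apply le_trans (Polynomial.natDegree_prod_le _ _)
  exact Finset.sum_le_sum fun t _ => h (σ t) t

variable {K : Type*} [Field K]

/-- Transfer of relative primality from `K[x][y]` to `K(x)[y]`. -/
lemma isCoprime_map_of_isRelPrime {a b : Polynomial (Polynomial K)}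
    (ha : a ≠ 0) (h : IsRelPrime a b) :
    IsCoprime (a.map (algebraMap (Polynomial K) (FractionRing (Polynomial K))))
      (b.map (algebraMap (Polynomial K) (FractionRing (Polynomial K)))) := by
  classical
  set R := Polynomial K
  set F1 := FractionRing R
  have hinj : Function.Injective (algebraMap R F1) := IsFractionRing.injective R F1
  apply IsRelPrime.isCoprime
  intro d hda hdb
  by_contra hdu
  have hd0 : d ≠ 0 := by
    rintro rfl
    rw [zero_dvd_iff, Polynomial.map_eq_zero_iff hinj] at hda
    exact ha hda
  have hddeg : d.degree ≠ 0 := fun hh => hdu (Polynomial.isUnit_iff_degree_eq_zero.mpr hh)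
  obtain ⟨bb, hbb⟩ := IsLocalization.integerNormalization_map_to_map (nonZeroDivisors R) d
  set D : Polynomial R := IsLocalization.integerNormalization (nonZeroDivisors R) d with hD
  have hbbne : algebraMap R F1 (bb : R) ≠ 0 := by
    simp only [ne_eq, map_eq_zero_iff _ hinj]
    exact nonZeroDivisors.coe_ne_zero bb
  have hmapD : D.map (algebraMap R F1) = C (algebraMap R F1 (bb : R)) * d := by
    rw [hbb, ← algebraMap_smul F1 ((bb : R)) d, Polynomial.smul_eq_C_mul]
  have hDne : D ≠ 0 := by
    intro hh
    rw [hh, Polynomial.map_zero] at hmapD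
    exact hd0 (by simpa [hbbne] using hmapD.symm)
  set D0 := D.primPart with hD0
  have hD0prim : D0.IsPrimitive := D.isPrimitive_primPart
  have hD0C : D = C D.content * D0 := D.eq_C_content_mul_primPart
  have hcontne : algebraMap R F1 D.content ≠ 0 := by
    simp only [ne_eq, map_eq_zero_iff _ hinj]
    simpa [Polynomial.content_eq_zero_iff] using hDne
  have hmapD0 : C (algebraMap R F1 D.content) * D0.map (algebraMap R F1)
      = C (algebraMap R F1 (bb : R)) * d := by
    rw [← hmapD]
    conv_rhs => rw [hD0C]
    rw [Polynomial.map_mul, Polynomial.map_C]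
  -- transfer divisibility
  have key : ∀ p : Polynomial R, p ≠ 0 →
      d ∣ p.map (algebraMap R F1) → D0 ∣ p := by
    intro p hp hdp
    have h1 : D0.map (algebraMap R F1) ∣ p.map (algebraMap R F1) := by
      have h2 : D0.map (algebraMap R F1) ∣ C (algebraMap R F1 (bb : R)) * d := by
        rw [← hmapD0]; exact dvd_mul_left _ _
      have h3 : D0.map (algebraMap R F1) ∣ C (algebraMap R F1 (bb : R)) * p.map (algebraMap R F1) :=
        h2.trans (mul_dvd_mul_left _ hdp)
      exact (IsUnit.dvd_mul_left (Polynomial.isUnit_C.mpr hbbne.isUnit)).mp h3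
    have h2 : D0.map (algebraMap R F1) ∣ (p.primPart).map (algebraMap R F1) := by
      have hcne : algebraMap R F1 p.content ≠ 0 := by
        simp only [ne_eq, map_eq_zero_iff _ hinj]
        simpa [Polynomial.content_eq_zero_iff] using hp
      have h4 : p.map (algebraMap R F1) = C (algebraMap R F1 p.content) *
          (p.primPart).map (algebraMap R F1) := by
        conv_lhs => rw [p.eq_C_content_mul_primPart]
        rw [Polynomial.map_mul, Polynomial.map_C]
      rw [h4] at h1
      exact (IsUnit.dvd_mul_left (Polynomial.isUnit_C.mpr hcne.isUnit)).mp h1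
    have := (Polynomial.IsPrimitive.dvd_iff_fraction_map_dvd_fraction_map F1
      hD0prim).mpr h2
    exact this.trans p.primPart_dvd
  have hda' : D0 ∣ a := key a ha hda
  have hdb' : D0 ∣ b := by
    by_cases hb : b = 0
    · exact hb ▸ dvd_zero D0
    · exact key b hb hdb
  have hD0unit : IsUnit D0 := h hda' hdb'
  have hdegD0 : D0.degree = 0 := Polynomial.degree_eq_zero_of_isUnit hD0unit
  have hdegmap : (D0.map (algebraMap R F1)).degree = 0 := by
    rw [Polynomial.degree_map_eq_of_injective hinj, hdegD0]
  have := congrArg Polynomial.degree hmapD0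
  rw [Polynomial.degree_mul, Polynomial.degree_mul, hdegmap,
    Polynomial.degree_C hcontne, Polynomial.degree_C hbbne] at this
  simp only [add_zero, zero_add] at this
  exact hddeg this.symm



end Aux11
end Aux11

noncomputable section Main11
namespace Aux11
open Polynomial Finset

variable {K : Type*} [Field K] [CharZero K]
variable (m : ℕ) (e : Fin m → ℕ) (gi : Fin m → Rxy K)

abbrev SIdx := Σ i : Fin m, Fin (e i) × Fin ((gi i).natDegree)

def cofP (i : Fin m) (j : Fin (e i)) : Rxy K :=
  gi i ^ (e i - ((j : ℕ) + 1)) * ∏ i' ∈ Finset.univ.erase i, gi i' ^ e i'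

def BP (t : SIdx m e gi) : Rxy K := cofP m e gi t.1 t.2.1 * X ^ (t.2.2 : ℕ)

lemma gipow_mul_cofP (i : Fin m) (j : Fin (e i)) :
    gi i ^ ((j : ℕ) + 1) * cofP m e gi i j = ∏ i', gi i' ^ e i' := by
  rw [cofP, ← mul_assoc, ← pow_add]
  have hh : (j : ℕ) + 1 + (e i - ((j : ℕ) + 1)) = e i := by have := j.isLt; omega
  rw [hh]
  exact Finset.mul_prod_erase Finset.univ (fun i_ => gi i_ ^ e i_) (Finset.mem_univ i)

lemma degX_prod {ι : Type*} (s : Finset ι) (F : ι → Rxy K) (hF : ∀ i ∈ s, F i ≠ 0) :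
    degX K (∏ i ∈ s, F i) = ∑ i ∈ s, degX K (F i) := by
  have h1 : swapH (K := K) (∏ i ∈ s, F i) = ∏ i ∈ s, swapH (K := K) (F i) :=
    map_prod (swapH K) F s
  rw [← natDegree_swapH, h1,
    Polynomial.natDegree_prod _ _ (fun i hi => swapH_eq_zero_iff.ne.mpr (hF i hi))]
  exact Finset.sum_congr rfl fun i _ => natDegree_swapH _

lemma cofP_ne_zero (hgi : ∀ i, gi i ≠ 0) (i : Fin m) (j : Fin (e i)) :
    cofP m e gi i j ≠ 0 :=
  mul_ne_zero (pow_ne_zero _ (hgi i))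
    (Finset.prod_ne_zero_iff.mpr fun i' _ => pow_ne_zero _ (hgi i'))

lemma degX_le_of_coeff {K : Type*} [Field K] [CharZero K] {r : Rxy K} {B : ℕ}
    (h : ∀ n, r.coeff n ≠ 0 → (r.coeff n).natDegree ≤ B) : degX K r ≤ B :=
  Finset.sup_le fun n hn => h n (Polynomial.mem_support_iff.mp hn)

lemma degX_zero {K : Type*} [Field K] [CharZero K] : degX K (0 : Rxy K) = 0 := by
  have : (0 : Rxy K).support = ∅ := Polynomial.support_zero
  show (0 : Rxy K).support.sup _ = 0
  rw [this, Finset.sup_empty]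
  rfl

/-- The key determinant is nonzero. -/
lemma det_ne_zero (he : ∀ i, 0 < e i) (hgi : ∀ i, gi i ≠ 0)
    (hcop : ∀ i j, i ≠ j → IsRelPrime (gi i) (gi j))
    (N : ℕ) (hBlt : ∀ t : SIdx m e gi, (BP m e gi t).natDegree < N)
    (ρ : SIdx m e gi ≃ Fin N) :
    (Matrix.of (fun s t : SIdx m e gi => (BP m e gi t).coeff (ρ s : ℕ))).det ≠ 0 := by
  classical
  intro hdet
  set R := Polynomial K
  set F1 := FractionRing R with hF1
  set φ : R →+* F1 := algebraMap R F1 with hφ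
  have hinj : Function.Injective φ := IsFractionRing.injective R F1
  set M : Matrix (SIdx m e gi) (SIdx m e gi) R :=
    Matrix.of (fun s t : SIdx m e gi => (BP m e gi t).coeff (ρ s : ℕ)) with hM
  set A : Matrix (SIdx m e gi) (SIdx m e gi) F1 := M.map φ with hA
  have hdetA : A.det = 0 := by
    have h := RingHom.map_det φ M
    rw [hdet, map_zero] at h
    rw [hA, show M.map ⇑φ = φ.mapMatrix M from rfl]
    exact h.symm
  obtain ⟨v, hv0, hv⟩ := Matrix.exists_mulVec_eq_zero_iff.mpr hdetA
  set gi' : Fin m → Polynomial F1 := fun i => (gi i).map φ with hgi'def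
  have hgine : ∀ i, gi' i ≠ 0 := fun i => (Polynomial.map_ne_zero_iff hinj).mpr (hgi i)
  have hdgi' : ∀ i, (gi' i).natDegree = (gi i).natDegree :=
    fun i => Polynomial.natDegree_map_eq_of_injective hinj _
  set P' : Polynomial F1 := ∑ t : SIdx m e gi, C (v t) * (BP m e gi t).map φ with hP'def
  have hP'c : ∀ n, P'.coeff n = ∑ t : SIdx m e gi, v t * φ ((BP m e gi t).coeff n) := by
    intro n
    rw [hP'def, Polynomial.finset_sum_coeff]
    exact Finset.sum_congr rfl fun t _ => by rw [coeff_C_mul, Polynomial.coeff_map]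
  have hP' : P' = 0 := by
    apply Polynomial.ext
    intro n
    rw [hP'c, Polynomial.coeff_zero]
    by_cases hn : n < N
    · have hs : ((ρ (ρ.symm ⟨n, hn⟩)) : ℕ) = n := by simp
      have hvs := congrFun hv (ρ.symm ⟨n, hn⟩)
      simp only [Matrix.mulVec, dotProduct, Pi.zero_apply] at hvs
      rw [← hvs]
      apply Finset.sum_congr rfl
      intro t _
      rw [mul_comm]
      congr 1
      rw [hA, Matrix.map_apply, hM, Matrix.of_apply, hs]
    · apply Finset.sum_eq_zero
      intro t _
      rw [Polynomial.coeff_eq_zero_of_natDegree_lt (lt_of_lt_of_le (hBlt t) (not_lt.mp hn)),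
        map_zero, mul_zero]
  -- group terms
  set H : (i : Fin m) → Polynomial F1 := fun i =>
    ∑ p : Fin (e i) × Fin ((gi i).natDegree),
      (C (v ⟨i, p⟩) * X ^ ((p.2 : ℕ))) * (gi' i) ^ (e i - ((p.1 : ℕ) + 1)) with hHdef
  set Cof : Fin m → Polynomial F1 := fun i => ∏ i' ∈ Finset.univ.erase i, (gi' i') ^ (e i')
    with hCofdef
  have hgroup : ∑ i, H i * Cof i = P' := by
    rw [hP'def, ← Finset.univ_sigma_univ, Finset.sum_sigma]
    apply Finset.sum_congr rfl
    intro i _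
    rw [hHdef]
    rw [Finset.sum_mul]
    apply Finset.sum_congr rfl
    intro p _
    have hBmap : (BP m e gi ⟨i, p⟩).map φ
        = (gi' i) ^ (e i - ((p.1 : ℕ) + 1)) * Cof i * X ^ ((p.2 : ℕ)) := by
      rw [BP, cofP, Polynomial.map_mul, Polynomial.map_mul, Polynomial.map_pow,
        Polynomial.map_pow, Polynomial.map_X, Polynomial.map_prod, hCofdef]
      simp only [Polynomial.map_pow, hgi'def]
    rw [hBmap]
    ring
  have hvanish : ∀ t : SIdx m e gi, v t = 0 := by
    rintro ⟨i0, j0, k0⟩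
    have hdpos : 0 < (gi i0).natDegree := lt_of_le_of_lt (Nat.zero_le _) k0.isLt
    have hsum0 : ∑ i, H i * Cof i = 0 := hgroup.trans hP'
    have hdvd : (gi' i0) ^ (e i0) ∣ H i0 * Cof i0 := by
      have h5 : H i0 * Cof i0 = 0 - ∑ i ∈ Finset.univ.erase i0, H i * Cof i := by
        rw [← Finset.add_sum_erase _ _ (Finset.mem_univ i0)] at hsum0
        linear_combination hsum0
      rw [h5]
      apply dvd_sub (dvd_zero _)
      apply Finset.dvd_sum
      intro i hi
      have hne : i ≠ i0 := (Finset.mem_erase.mp hi).1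
      have : (gi' i0) ^ (e i0) ∣ Cof i := by
        apply Finset.dvd_prod_of_mem (fun i' => (gi' i') ^ (e i'))
        rw [Finset.mem_erase]
        exact ⟨hne.symm, Finset.mem_univ _⟩
      exact this.mul_left _
    have hcp : IsCoprime ((gi' i0) ^ (e i0)) (Cof i0) := by
      apply IsCoprime.pow_left
      apply IsCoprime.prod_right
      intro i hi
      apply IsCoprime.pow_right
      exact isCoprime_map_of_isRelPrime (hgi i0) (hcop i0 i ((Finset.mem_erase.mp hi).1.symm))
    have hdvdH : (gi' i0) ^ (e i0) ∣ H i0 := hcp.dvd_of_dvd_mul_right hdvd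
    set Q : Fin (e i0) → Polynomial F1 :=
      fun j => ∑ k : Fin ((gi i0).natDegree), C (v ⟨i0, (j, k)⟩) * X ^ (k : ℕ) with hQdef
    have hHQ : H i0 = ∑ j : Fin (e i0), Q j * (gi' i0) ^ (e i0 - 1 - (j : ℕ)) := by
      simp only [hHdef]
      rw [Fintype.sum_prod_type]
      apply Finset.sum_congr rfl
      intro j _
      simp only [hQdef]
      rw [Finset.sum_mul]
      apply Finset.sum_congr rfl
      intro k _
      have hexp : e i0 - ((j : ℕ) + 1) = e i0 - 1 - (j : ℕ) := by omega
      rw [hexp]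
    have hdegQ : ∀ j, (Q j).degree < (gi' i0).degree := by
      intro j
      rw [Polynomial.degree_eq_natDegree (hgine i0), hdgi' i0]
      exact degree_finsum_lt hdpos _
    have hH0 : H i0 = 0 := by
      by_cases hH : H i0 = 0
      · exact hH
      · apply Polynomial.eq_zero_of_dvd_of_degree_lt hdvdH
        have hnd : (H i0).natDegree < e i0 * (gi i0).natDegree := by
          have hQd : ∀ j : Fin (e i0), (Q j).natDegree ≤ (gi i0).natDegree - 1 := by
            intro j
            by_cases hQ0 : Q j = 0
            · rw [hQ0, Polynomial.natDegree_zero]; omega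
            · have hlt : (Q j).degree < (((gi i0).natDegree : ℕ) : WithBot ℕ) := by
                rw [← hdgi' i0, ← Polynomial.degree_eq_natDegree (hgine i0)]
                exact hdegQ j
              have := (Polynomial.natDegree_lt_iff_degree_lt hQ0).mpr hlt
              omega
          have hb : ∀ j : Fin (e i0),
              (Q j * (gi' i0) ^ (e i0 - 1 - (j : ℕ))).natDegree ≤ e i0 * (gi i0).natDegree - 1 := by
            intro j
            apply le_trans Polynomial.natDegree_mul_le
            have h1 : ((gi' i0) ^ (e i0 - 1 - (j : ℕ))).natDegree
                = (e i0 - 1 - (j:ℕ)) * (gi i0).natDegree := by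
              rw [Polynomial.natDegree_pow, hdgi' i0]
            rw [h1]
            have h2 : (e i0 - 1 - (j:ℕ)) * (gi i0).natDegree ≤ (e i0 - 1) * (gi i0).natDegree :=
              Nat.mul_le_mul_right _ (by omega)
            have h3 : (e i0 - 1) * (gi i0).natDegree = e i0 * (gi i0).natDegree - (gi i0).natDegree :=
              Nat.sub_one_mul _ _
            have h4 : (gi i0).natDegree ≤ e i0 * (gi i0).natDegree :=
              Nat.le_mul_of_pos_left _ (he i0)
            have := hQd j
            omega
          have := Polynomial.natDegree_sum_le_of_forall_le Finset.univ _ (fun j _ => hb j)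
          rw [← hHQ] at this
          have h4 : (gi i0).natDegree ≤ e i0 * (gi i0).natDegree :=
            Nat.le_mul_of_pos_left _ (he i0)
          have h5 : 0 < e i0 * (gi i0).natDegree := lt_of_lt_of_le hdpos h4
          omega
        rw [Polynomial.degree_eq_natDegree hH,
          Polynomial.degree_eq_natDegree (pow_ne_zero _ (hgine i0))]
        have h6 : ((gi' i0) ^ (e i0)).natDegree = e i0 * (gi i0).natDegree := by
          rw [Polynomial.natDegree_pow, hdgi' i0]
        rw [h6]
        exact_mod_cast hnd
    have hQ0 : ∀ j, Q j = 0 :=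
      expansion_eq_zero (hgine i0) (e i0) Q hdegQ (by rw [← hHQ]; exact hH0)
    have hcz : (Q j0).coeff (k0 : ℕ) = 0 := by rw [hQ0 j0]; simp
    have hc := coeff_finsum' (fun k : Fin ((gi i0).natDegree) => v ⟨i0, (j0, k)⟩) (k0 : ℕ)
    simp only [hQdef] at hcz
    rw [hc, dif_pos k0.isLt] at hcz
    simpa using hcz
  exact hv0 (funext hvanish)

end Aux11
end Main11

/-- Fact `FAC:degreesize` (ii): partial fractions with degree bounds.
Let `f, g ∈ K[x,y]` be nonzero with `deg_y(f) < deg_y(g)`, and suppose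
`g = g_1^{e_1} ⋯ g_m^{e_m}` with `e_i > 0` and the `g_i` pairwise coprime.  Then there
exist a nonzero `u ∈ K[x]` and `f_{ij} ∈ K[x,y]` such that
`f/g = (1/u) Σ_i Σ_{j=1}^{e_i} f_{ij}/g_i^j`, with
`deg_x(u) ≤ deg_x(g) deg_y(g) − Σ_i (e_i(1+e_i)/2) deg_x(g_i) deg_y(g_i)` and, for all
`i, j`, `deg_x(f_{ij}) ≤ deg_x(g) deg_y(g) + deg_x(f) − deg_x(g) + j·deg_x(g_i)` and
`deg_y(f_{ij}) ≤ deg_y(g_i) − 1`. -/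
theorem statement11 (K : Type*) [Field K] [CharZero K]
    (f g : Rxy K) (hf : f ≠ 0) (hg : g ≠ 0) (hdeg : f.degree < g.degree)
    (m : ℕ) (e : Fin m → ℕ) (he : ∀ i, 0 < e i) (gi : Fin m → Rxy K)
    (hfac : g = ∏ i, gi i ^ e i)
    (hcop : ∀ i j, i ≠ j → IsRelPrime (gi i) (gi j)) :
    ∃ (u : Polynomial K) (fij : (i : Fin m) → Fin (e i) → Rxy K),
      u ≠ 0 ∧
      ι₀ K f / ι₀ K g =
        (ιx₀ K u)⁻¹ *
          ∑ i : Fin m, ∑ j : Fin (e i), ι₀ K (fij i j) / ι₀ K (gi i) ^ ((j : ℕ) + 1) ∧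
      (u.natDegree : ℤ) ≤
        (degX K g : ℤ) * (g.natDegree : ℤ) -
          ∑ i : Fin m,
            ((e i : ℤ) * (1 + (e i : ℤ)) / 2) * (degX K (gi i) : ℤ) *
              ((gi i).natDegree : ℤ) ∧
      ∀ (i : Fin m) (j : Fin (e i)),
        (degX K (fij i j) : ℤ) ≤
            (degX K g : ℤ) * (g.natDegree : ℤ) + (degX K f : ℤ) - (degX K g : ℤ) +
              (((j : ℕ) : ℤ) + 1) * (degX K (gi i) : ℤ) ∧
          (fij i j).degree < (gi i).degree := by
  classical
  have hgi : ∀ i, gi i ≠ 0 := by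
    intro i hzi
    apply hg
    rw [hfac]
    exact Finset.prod_eq_zero (Finset.mem_univ i) (by rw [hzi]; exact zero_pow (he i).ne')
  have hfN : f.natDegree < g.natDegree := Polynomial.natDegree_lt_natDegree hf hdeg
  have hNsum : g.natDegree = ∑ i, e i * (gi i).natDegree := by
    rw [hfac, Polynomial.natDegree_prod _ _ (fun i _ => pow_ne_zero _ (hgi i))]
    exact Finset.sum_congr rfl fun i _ => Polynomial.natDegree_pow _ _
  have hcard : Fintype.card (Aux11.SIdx m e gi) = g.natDegree := by
    rw [hNsum, Fintype.card_sigma]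
    exact Finset.sum_congr rfl fun i _ => by simp
  set ρ : Aux11.SIdx m e gi ≃ Fin g.natDegree := Fintype.equivFinOfCardEq hcard with hρ
  have hcofne : ∀ (i : Fin m) (j : Fin (e i)), Aux11.cofP m e gi i j ≠ 0 :=
    Aux11.cofP_ne_zero m e gi hgi
  have hgicof : ∀ (i : Fin m) (j : Fin (e i)),
      gi i ^ ((j : ℕ) + 1) * Aux11.cofP m e gi i j = g := by
    intro i j; rw [Aux11.gipow_mul_cofP, ← hfac]
  have hndcof : ∀ (i : Fin m) (j : Fin (e i)),
      ((j : ℕ) + 1) * (gi i).natDegree + (Aux11.cofP m e gi i j).natDegree = g.natDegree := by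
    intro i j
    conv_rhs => rw [← hgicof i j]
    rw [Polynomial.natDegree_mul (pow_ne_zero _ (hgi i)) (hcofne i j), Polynomial.natDegree_pow]
  have hBlt : ∀ t : Aux11.SIdx m e gi, (Aux11.BP m e gi t).natDegree < g.natDegree := by
    rintro ⟨i, j, k⟩
    have hBval : Aux11.BP m e gi ⟨i, (j, k)⟩ = Aux11.cofP m e gi i j * X ^ (k : ℕ) := rfl
    rw [hBval, Polynomial.natDegree_mul (hcofne i j) (pow_ne_zero _ Polynomial.X_ne_zero),
      Polynomial.natDegree_X_pow]
    have h1 := hndcof i j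
    have h2 : (k : ℕ) < (gi i).natDegree := k.isLt
    have h3 : (gi i).natDegree ≤ ((j : ℕ) + 1) * (gi i).natDegree :=
      Nat.le_mul_of_pos_left _ (by omega)
    omega
  set M : Matrix (Aux11.SIdx m e gi) (Aux11.SIdx m e gi) (Polynomial K) :=
    Matrix.of (fun s t => (Aux11.BP m e gi t).coeff (ρ s : ℕ)) with hM
  set u : Polynomial K := M.det with hudef
  have hune : u ≠ 0 := Aux11.det_ne_zero m e gi he hgi hcop g.natDegree hBlt ρ
  set bv : Aux11.SIdx m e gi → Polynomial K := fun s => f.coeff (ρ s : ℕ) with hbv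
  set cv : Aux11.SIdx m e gi → Polynomial K := M.cramer bv with hcv
  set fij : (i : Fin m) → Fin (e i) → Rxy K := fun i j =>
    ∑ k : Fin ((gi i).natDegree), Polynomial.C (cv ⟨i, (j, k)⟩) * X ^ (k : ℕ) with hfij
  -- the polynomial identity
  have hkey : ∑ t : Aux11.SIdx m e gi, Polynomial.C (cv t) * Aux11.BP m e gi t
      = Polynomial.C u * f := by
    apply Polynomial.ext
    intro n
    rw [Polynomial.finset_sum_coeff, Polynomial.coeff_C_mul]
    by_cases hn : n < g.natDegree
    · have hvc := congrFun (Matrix.mulVec_cramer M bv) (ρ.symm ⟨n, hn⟩)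
      simp only [Matrix.mulVec, dotProduct, Pi.smul_apply, smul_eq_mul] at hvc
      have hs : ((ρ (ρ.symm ⟨n, hn⟩)) : ℕ) = n := by simp
      have hL : ∑ t, (Polynomial.C (cv t) * Aux11.BP m e gi t).coeff n
          = ∑ t, M (ρ.symm ⟨n, hn⟩) t * cv t := by
        apply Finset.sum_congr rfl
        intro t _
        rw [Polynomial.coeff_C_mul, hM, Matrix.of_apply, hs, mul_comm]
      rw [hL, hvc]
      simp only [hbv]
      rw [hs]
    · have hf0 : f.coeff n = 0 :=
        Polynomial.coeff_eq_zero_of_natDegree_lt (lt_of_lt_of_le hfN (not_lt.mp hn))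
      rw [hf0, mul_zero]
      apply Finset.sum_eq_zero
      intro t _
      rw [Polynomial.coeff_C_mul,
        Polynomial.coeff_eq_zero_of_natDegree_lt (lt_of_lt_of_le (hBlt t) (not_lt.mp hn)),
        mul_zero]
  have hkey2 : ∑ i, ∑ j, fij i j * Aux11.cofP m e gi i j = Polynomial.C u * f := by
    have hsig : ∑ t : Aux11.SIdx m e gi, Polynomial.C (cv t) * Aux11.BP m e gi t
        = ∑ i, ∑ p : Fin (e i) × Fin ((gi i).natDegree),
            Polynomial.C (cv ⟨i, p⟩) * Aux11.BP m e gi ⟨i, p⟩ := by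
      rw [← Finset.univ_sigma_univ, Finset.sum_sigma]
    rw [← hkey, hsig]
    apply Finset.sum_congr rfl
    intro i _
    rw [Fintype.sum_prod_type]
    apply Finset.sum_congr rfl
    intro j _
    simp only [hfij]
    rw [Finset.sum_mul]
    apply Finset.sum_congr rfl
    intro k _
    have hBval : Aux11.BP m e gi ⟨i, (j, k)⟩ = Aux11.cofP m e gi i j * X ^ (k : ℕ) := rfl
    rw [hBval]
    ring
  -- nonvanishing in the fraction field
  have hιinj : Function.Injective (ι₀ K) := IsFractionRing.injective _ _
  have hι0 : ∀ r : Rxy K, r ≠ 0 → ι₀ K r ≠ 0 := by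
    intro r hr hh
    exact hr (hιinj (by rw [hh, map_zero]))
  have hgF : ι₀ K g ≠ 0 := hι0 g hg
  have huF : ιx₀ K u ≠ 0 := by
    have h1 : ιx₀ K u = ι₀ K (Polynomial.C u) := rfl
    rw [h1]
    exact hι0 _ (by simpa using hune)
  -- column degree bounds
  have hcolle : ∀ s t : Aux11.SIdx m e gi,
      (M s t).natDegree ≤ degX K (Aux11.cofP m e gi t.1 t.2.1) := by
    intro s t
    rw [hM, Matrix.of_apply]
    apply le_trans (Aux11.coeff_natDegree_le_degX _ _)
    have hBX : degX K (Aux11.BP m e gi t) = degX K (Aux11.cofP m e gi t.1 t.2.1) := by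
      rw [Aux11.BP, Aux11.degX_mul (hcofne _ _) (pow_ne_zero _ Polynomial.X_ne_zero),
        Aux11.degX_X_pow, add_zero]
    exact le_of_eq hBX
  have hub : u.natDegree ≤ ∑ t : Aux11.SIdx m e gi, degX K (Aux11.cofP m e gi t.1 t.2.1) := by
    rw [hudef]
    exact Aux11.natDegree_det_le M _ hcolle
  have hdegXcof : ∀ (i : Fin m) (j : Fin (e i)),
      ((j : ℕ) + 1) * degX K (gi i) + degX K (Aux11.cofP m e gi i j) = degX K g := by
    intro i j
    conv_rhs => rw [← hgicof i j]
    rw [Aux11.degX_mul (pow_ne_zero _ (hgi i)) (hcofne i j), Aux11.degX_pow]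
  have hgauss : ∀ E : ℕ, (2:ℤ) * (∑ j : Fin E, (((j:ℕ):ℤ) + 1)) = E * (1 + E) := by
    intro E
    induction E with
    | zero => simp
    | succ E ih =>
        rw [Fin.sum_univ_castSucc]
        simp only [Fin.coe_castSucc, Fin.val_last]
        push_cast
        push_cast at ih
        linear_combination ih
  have hEdiv : ∀ E : ℕ, ((E:ℤ) * (1 + (E:ℤ))) / 2 = ∑ j : Fin E, (((j:ℕ):ℤ) + 1) := by
    intro E
    rw [← hgauss E, Int.mul_ediv_cancel_left _ (by norm_num)]
  have hcofZ : ∀ (i : Fin m) (j : Fin (e i)), (degX K (Aux11.cofP m e gi i j) : ℤ)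
      = (degX K g : ℤ) - (((j:ℕ):ℤ) + 1) * (degX K (gi i) : ℤ) := by
    intro i j
    have h1 := hdegXcof i j
    have h2 : ((((j:ℕ)+1) * degX K (gi i) + degX K (Aux11.cofP m e gi i j) : ℕ) : ℤ)
        = ((degX K g : ℕ) : ℤ) := by exact_mod_cast congrArg (Nat.cast (R := ℤ)) h1
    push_cast at h2
    linarith
  have hsumcol : (∑ t : Aux11.SIdx m e gi, (degX K (Aux11.cofP m e gi t.1 t.2.1) : ℤ))
      = (degX K g : ℤ) * (g.natDegree : ℤ)
        - ∑ i, ((e i : ℤ) * (1 + (e i : ℤ)) / 2) * (degX K (gi i) : ℤ)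
            * ((gi i).natDegree : ℤ) := by
    rw [← Finset.univ_sigma_univ, Finset.sum_sigma]
    have hstep : ∀ i : Fin m,
        (∑ p : Fin (e i) × Fin ((gi i).natDegree), (degX K (Aux11.cofP m e gi i p.1) : ℤ))
        = ((e i : ℤ) * ((gi i).natDegree : ℤ)) * (degX K g : ℤ)
          - ((e i : ℤ) * (1 + (e i : ℤ)) / 2) * (degX K (gi i) : ℤ)
              * ((gi i).natDegree : ℤ) := by
      intro i
      rw [Fintype.sum_prod_type]
      have h1 : ∀ j : Fin (e i),
          (∑ _k : Fin ((gi i).natDegree), (degX K (Aux11.cofP m e gi i j) : ℤ))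
          = ((gi i).natDegree : ℤ)
              * ((degX K g : ℤ) - (((j:ℕ):ℤ) + 1) * (degX K (gi i) : ℤ)) := by
        intro j
        rw [Finset.sum_const, Finset.card_univ, Fintype.card_fin, hcofZ i j, nsmul_eq_mul]
      rw [Finset.sum_congr rfl (fun j _ => h1 j), ← Finset.mul_sum]
      rw [Finset.sum_sub_distrib, Finset.sum_const, Finset.card_univ, Fintype.card_fin,
        nsmul_eq_mul, ← Finset.sum_mul]
      rw [← hEdiv (e i)]
      ring
    rw [Finset.sum_congr rfl (fun i _ => hstep i), Finset.sum_sub_distrib]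
    congr 1
    rw [hNsum]
    push_cast
    rw [Finset.mul_sum]
    exact Finset.sum_congr rfl fun i _ => by ring
  have hE0 : (0:ℤ) ≤ ∑ i, ((e i : ℤ) * (1 + (e i : ℤ)) / 2) * (degX K (gi i) : ℤ)
      * ((gi i).natDegree : ℤ) := by
    apply Finset.sum_nonneg
    intro i _
    have h1 : (0:ℤ) ≤ (e i : ℤ) * (1 + (e i : ℤ)) / 2 :=
      Int.ediv_nonneg (by positivity) (by norm_num)
    exact mul_nonneg (mul_nonneg h1 (Int.natCast_nonneg _)) (Int.natCast_nonneg _)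
  refine ⟨u, fij, hune, ?_, ?_, ?_⟩
  · -- main identity
    have hterm : ∀ (i : Fin m) (j : Fin (e i)),
        ι₀ K (fij i j) / ι₀ K (gi i) ^ ((j : ℕ) + 1)
          = ι₀ K (fij i j) * ι₀ K (Aux11.cofP m e gi i j) / ι₀ K g := by
      intro i j
      conv_rhs => rw [← hgicof i j]
      rw [map_mul, map_pow]
      rw [mul_div_mul_right _ _ (hι0 _ (hcofne i j))]
    have h7 : (∑ i, ∑ j : Fin (e i), ι₀ K (fij i j) / ι₀ K (gi i) ^ ((j : ℕ) + 1))
        = (ι₀ K (Polynomial.C u) * ι₀ K f) / ι₀ K g := by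
      rw [Finset.sum_congr rfl (fun i _ => Finset.sum_congr rfl (fun j _ => hterm i j))]
      simp_rw [← Finset.sum_div]
      rw [← map_mul]
      simp_rw [← map_mul, ← map_sum]
      rw [hkey2, map_mul]
    rw [h7, show ιx₀ K u = ι₀ K (Polynomial.C u) from rfl]
    rw [mul_div_assoc, ← mul_assoc, inv_mul_cancel₀ (by exact huF), one_mul]
  · -- degree bound for u
    have hZ : (u.natDegree : ℤ)
        ≤ ∑ t : Aux11.SIdx m e gi, (degX K (Aux11.cofP m e gi t.1 t.2.1) : ℤ) := by
      rw [← Nat.cast_sum]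
      exact_mod_cast hub
    rw [hsumcol] at hZ
    exact hZ
  · -- bounds for the fij
    intro i j
    have hcramer : ∀ t0 : Aux11.SIdx m e gi, (cv t0).natDegree ≤
        ∑ t : Aux11.SIdx m e gi,
          (if t = t0 then degX K f else degX K (Aux11.cofP m e gi t.1 t.2.1)) := by
      intro t0
      have hcvt : cv t0 = (M.updateCol t0 bv).det := by
        rw [hcv]; exact Matrix.cramer_apply M bv t0
      rw [hcvt]
      apply Aux11.natDegree_det_le
      intro s t
      rw [Matrix.updateCol_apply]
      by_cases ht : t = t0
      · rw [if_pos ht, if_pos ht]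
        simp only [hbv]
        exact Aux11.coeff_natDegree_le_degX f _
      · rw [if_neg ht, if_neg ht]
        exact hcolle s t
    have hsplit : ∀ t0 : Aux11.SIdx m e gi,
        ((∑ t : Aux11.SIdx m e gi,
          (if t = t0 then degX K f else degX K (Aux11.cofP m e gi t.1 t.2.1)) : ℕ) : ℤ)
        = (∑ t : Aux11.SIdx m e gi, (degX K (Aux11.cofP m e gi t.1 t.2.1) : ℤ))
          - (degX K (Aux11.cofP m e gi t0.1 t0.2.1) : ℤ) + (degX K f : ℤ) := by
      intro t0
      rw [Nat.cast_sum]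
      rw [← Finset.add_sum_erase _ _ (Finset.mem_univ t0), if_pos rfl]
      rw [← Finset.add_sum_erase _
        (fun t : Aux11.SIdx m e gi => (degX K (Aux11.cofP m e gi t.1 t.2.1) : ℤ))
        (Finset.mem_univ t0)]
      rw [Finset.sum_congr rfl
        (fun t ht => by rw [if_neg (Finset.mem_erase.mp ht).1])]
      push_cast
      ring
    constructor
    · -- degX bound for fij
      by_cases hdi : (gi i).natDegree = 0
      · have hie : IsEmpty (Fin ((gi i).natDegree)) := by
          rw [hdi]; exact Fin.isEmpty
        have hfij0 : fij i j = 0 := by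
          simp only [hfij]
          rw [Finset.univ_eq_empty, Finset.sum_empty]
        rw [hfij0, Aux11.degX_zero]
        have hN1 : 1 ≤ g.natDegree := by omega
        have h2 : (1:ℤ) ≤ (g.natDegree : ℤ) := by exact_mod_cast hN1
        have h3 : (0:ℤ) ≤ (degX K g : ℤ) := Int.natCast_nonneg _
        have h4 : (0:ℤ) ≤ (degX K f : ℤ) := Int.natCast_nonneg _
        have h5 : (0:ℤ) ≤ (((j:ℕ):ℤ) + 1) * (degX K (gi i) : ℤ) := by positivity
        push_cast
        nlinarith
      · have hdpos : 0 < (gi i).natDegree := Nat.pos_of_ne_zero hdi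
        set t0 : Aux11.SIdx m e gi := ⟨i, (j, ⟨0, hdpos⟩)⟩ with ht0
        have hsame : ∀ k : Fin ((gi i).natDegree),
            (∑ t : Aux11.SIdx m e gi, (if t = (⟨i, (j, k)⟩ : Aux11.SIdx m e gi) then degX K f
              else degX K (Aux11.cofP m e gi t.1 t.2.1)))
            = ∑ t : Aux11.SIdx m e gi, (if t = t0 then degX K f
              else degX K (Aux11.cofP m e gi t.1 t.2.1)) := by
          intro k
          have ha := hsplit (⟨i, (j, k)⟩ : Aux11.SIdx m e gi)
          have hb2 := hsplit t0
          exact Nat.cast_injective (ha.trans hb2.symm)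
        have hsup : degX K (fij i j) ≤
            ∑ t : Aux11.SIdx m e gi, (if t = t0 then degX K f
              else degX K (Aux11.cofP m e gi t.1 t.2.1)) := by
          apply Aux11.degX_le_of_coeff
          intro n hcne
          have hco := Aux11.coeff_finsum'
            (fun k : Fin ((gi i).natDegree) => cv ⟨i, (j, k)⟩) n
          simp only [hfij] at hcne ⊢
          rw [hco] at hcne ⊢
          by_cases hnd : n < (gi i).natDegree
          · rw [dif_pos hnd]
            exact le_trans (hcramer ⟨i, (j, ⟨n, hnd⟩)⟩) (le_of_eq (hsame ⟨n, hnd⟩))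
          · rw [dif_neg hnd] at hcne
            exact absurd rfl hcne
        have hZ : (degX K (fij i j) : ℤ)
            ≤ ((∑ t : Aux11.SIdx m e gi, (if t = t0 then degX K f
              else degX K (Aux11.cofP m e gi t.1 t.2.1)) : ℕ) : ℤ) := by
          exact_mod_cast hsup
        rw [hsplit t0] at hZ
        have hproj : (degX K (Aux11.cofP m e gi t0.1 t0.2.1) : ℤ)
            = (degX K (Aux11.cofP m e gi i j) : ℤ) := rfl
        rw [hproj, hsumcol, hcofZ i j] at hZ
        linarith [hE0]
    · -- y-degree bound for fij
      by_cases hdi : (gi i).natDegree = 0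
      · have hie : IsEmpty (Fin ((gi i).natDegree)) := by
          rw [hdi]; exact Fin.isEmpty
        have hfij0 : fij i j = 0 := by
          simp only [hfij]
          rw [Finset.univ_eq_empty, Finset.sum_empty]
        rw [hfij0, Polynomial.degree_zero, Polynomial.degree_eq_natDegree (hgi i)]
        exact WithBot.bot_lt_coe _
      · have hdpos : 0 < (gi i).natDegree := Nat.pos_of_ne_zero hdi
        have hlt := Aux11.degree_finsum_lt hdpos
          (fun k : Fin ((gi i).natDegree) => cv ⟨i, (j, k)⟩)
        have hfv : fij i j
            = ∑ k : Fin ((gi i).natDegree), Polynomial.C (cv ⟨i, (j, k)⟩) * X ^ (k : ℕ) := by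
          simp only [hfij]
        rw [hfv]
        refine lt_of_lt_of_le hlt ?_
        rw [Polynomial.degree_eq_natDegree (hgi i)]
end

section
/- Let r ∈ K(x,y) be a rational function of the form r = Σ_{i=1}^{m} Σ_{k=1}^{d_i} M_{ik}(1/p_i(λ_i x + μ_i y)^k) as in the context. Let u ∈ K[x] be the common denominator of the M_{ik} and write each M_{ik} = (1/u) M̃_{ik} with M̃_{ik} ∈ K[x, y, S_{λ_i,μ_i}]. Let L = Σ_{ℓ=0}^{ρ} c_ℓ σ_x^{ℓ}(u) S_x^{ℓ} ∈ K[x][S_x] with ρ ∈ N and c_ℓ ∈ K[x]. Then for each pair (i,k) with 1 ≤ i ≤ m and 1 ≤ k ≤ d_i, the left scalar remainder R_{ik} of L ⊙ M_{ik} by S_y − 1 can be written as R_{ik} = c_ρ R̃_{ikρ} + ⋯ + c_0 R̃_{ik0}, where R̃_{ikℓ} ∈ K[x, y, S_{λ_i,μ_i}] with deg_x(R̃_{ikℓ}) ≤ deg_x(M̃_{ik}), deg_y(R̃_{ikℓ}) ≤ deg_y(M̃_{ik}), and total degree in (x,y) of R̃_{ikℓ} at most the total degree in (x,y) of M̃_{ik}.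 -/
open Polynomial BigOperators

noncomputable section

variable (K : Type*) [Field K] [CharZero K]

/-- A nonzero polynomial `b ∈ K[x,y]` is `σ_y`-free if `gcd(b, σ_y^ℓ(b)) ∈ K[x]` for all
nonzero integers `ℓ`, i.e. every common divisor of `b` and `σ_y^ℓ(b)` has `y`-degree `0`. -/
def SigmaYFree (b : Rxy K) : Prop :=
  ∀ ℓ : ℤ, ℓ ≠ 0 → ∀ d : Rxy K, d ∣ b → d ∣ (σyR K ^ ℓ) b → d.natDegree = 0

/-- A polynomial in `K[x,y] = K[x][y]` is `y`-primitive if the gcd over `K[x]` of its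
coefficients with respect to `y` equals `1`. -/
def YPrimitive (b : Rxy K) : Prop :=
  ∀ d : Polynomial K, (∀ n : ℕ, d ∣ b.coeff n) → IsUnit d

/-- A rational function is proper with respect to `y`: the degree in `y` of its numerator
is less than that of its denominator. -/
def ProperY (f : Fxy K) : Prop :=
  ∃ a b : Rxy K, b ≠ 0 ∧ f = ι₀ K a / ι₀ K b ∧ a.degree < b.degree

/-- A rational function has a `σ_y`-free denominator (in lowest terms). -/
def SigmaYFreeDenom (f : Fxy K) : Prop :=
  ∃ a b : Rxy K, b ≠ 0 ∧ IsRelPrime a b ∧ f = ι₀ K a / ι₀ K b ∧ SigmaYFree K b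

/-- `r` is a `σ_y`-remainder (of itself): proper with respect to `y`, with `σ_y`-free
denominator. -/
def IsSigmaYRemainder (r : Fxy K) : Prop := ProperY K r ∧ SigmaYFreeDenom K r

/-- `r` is a `σ_y`-remainder of `f`: `f − r` is `σ_y`-summable, `r` is proper with
respect to `y`, and the denominator of `r` is `σ_y`-free. -/
def IsSigmaYRemainderOf (r f : Fxy K) : Prop :=
  IsSummableY K (f - r) ∧ IsSigmaYRemainder K r

end

noncomputable section

variable (K : Type*) [Field K] [CharZero K]

/-- Operators in `K[x,y][S_{λ,μ}]` (polynomial coefficients), recorded by their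
coefficient families. -/
abbrev OpR := ℤ →₀ Rxy K

/-- The inclusion `K[x,y][S_{λ,μ}] ⊆ K(x,y)[S_{λ,μ}, S_{λ,μ}⁻¹]`. -/
def toOpB (N : OpR K) : OpB K := Finsupp.mapRange (ι₀ K) (map_zero _) N

/-- The degree in `x` of an operator with coefficients in `K[x,y]`. -/
def degXOp (N : OpR K) : ℕ := N.support.sup fun l => degX K (N l)

/-- The degree in `y` of an operator with coefficients in `K[x,y]`. -/
def degYOp (N : OpR K) : ℕ := N.support.sup fun l => (N l).natDegree

/-- The total degree in `x, y` of an operator with coefficients in `K[x,y]`. -/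
def degXYOp (N : OpR K) : ℕ := N.support.sup fun l => degXY K (N l)

end
section Aux
open Polynomial

variable {A B : Type*} [CommRing A] [CommRing B]

lemma shiftPoly_apply (q : Polynomial A) : shiftPoly A q = aeval (X + 1) q := rfl

lemma shiftPoly_symm_apply (q : Polynomial A) : (shiftPoly A).symm q = aeval (X - 1) q := rfl

-- zpow transport along a ring hom
lemma comm_zpow (e : RingAut A) (f : RingAut B) (g : A →+* B)
    (h : ∀ a, f (g a) = g (e a)) : ∀ (n : ℤ) (a : A), (f ^ n) (g a) = g ((e ^ n) a) := by
  have hinv : ∀ a, f⁻¹ (g a) = g (e⁻¹ a) := by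
    intro a
    apply f.injective
    rw [h]
    show f (f.symm (g a)) = _
    rw [f.apply_symm_apply]
    show g a = g (e (e.symm a))
    rw [e.apply_symm_apply]
  intro n
  induction n using Int.induction_on with
  | zero => intro a; rfl
  | succ k ih =>
      intro a
      rw [zpow_add_one]
      show (f ^ (k:ℤ)) (f (g a)) = _
      rw [h, ih, zpow_add_one]
      rfl
  | pred k ih =>
      intro a
      rw [zpow_sub_one]
      show (f ^ (-k:ℤ)) (f⁻¹ (g a)) = _
      rw [hinv, ih, zpow_sub_one]
      rfl

end Aux
set_option linter.unusedSectionVars false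
section Aux2
open Polynomial

variable {K : Type*} [Field K] [CharZero K]

lemma sigmaF_iota (a : Rxy K) : σyF K (ι₀ K a) = ι₀ K (σyR K a) :=
  IsFractionRing.ringEquivOfRingEquiv_algebraMap (σyR K) a

lemma sigmaxF_iota (a : Rxy K) : σxF K (ι₀ K a) = ι₀ K (σxR K a) :=
  IsFractionRing.ringEquivOfRingEquiv_algebraMap (σxR K) a

lemma sigmaxR_C (p : Polynomial K) : σxR K (Polynomial.C p) = Polynomial.C (σxK K p) := by
  simp [σxR, σxK]

lemma sigmayR_C (p : Polynomial K) : σyR K (Polynomial.C p) = Polynomial.C p := by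
  show shiftPoly (Polynomial K) (Polynomial.C p) = _
  rw [shiftPoly_apply, aeval_C]
  rfl

lemma sigmayF_zpow_iota (n : ℤ) (a : Rxy K) : (σyF K ^ n) (ι₀ K a) = ι₀ K ((σyR K ^ n) a) :=
  comm_zpow (σyR K) (σyF K) (ι₀ K) (sigmaF_iota) n a

lemma sigmaxF_zpow_iota (n : ℤ) (a : Rxy K) : (σxF K ^ n) (ι₀ K a) = ι₀ K ((σxR K ^ n) a) :=
  comm_zpow (σxR K) (σxF K) (ι₀ K) (sigmaxF_iota) n a

lemma sigmaxF_zpow_iotax (n : ℤ) (p : Polynomial K) :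
    (σxF K ^ n) (ιx₀ K p) = ιx₀ K ((σxK K ^ n) p) := by
  have h : ∀ p : Polynomial K, σxF K (ιx₀ K p) = ιx₀ K (σxK K p) := by
    intro p
    show σxF K (ι₀ K (Polynomial.C p)) = ι₀ K (Polynomial.C (σxK K p))
    rw [sigmaxF_iota, sigmaxR_C]
  exact comm_zpow (σxK K) (σxF K) (ιx₀ K) h n p

lemma sigmayF_zpow_iotax (n : ℤ) (p : Polynomial K) :
    (σyF K ^ n) (ιx₀ K p) = ιx₀ K p := by
  have h : ∀ p : Polynomial K, σyF K (ιx₀ K p) = ιx₀ K ((1 : RingAut (Polynomial K)) p) := by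
    intro p
    show σyF K (ι₀ K (Polynomial.C p)) = _
    rw [sigmaF_iota, sigmayR_C]; rfl
  have := comm_zpow (1 : RingAut (Polynomial K)) (σyF K) (ιx₀ K) h n p
  simpa using this

lemma sigmayR_zpow_C (n : ℤ) (p : Polynomial K) :
    (σyR K ^ n) (Polynomial.C p : Rxy K) = Polynomial.C p := by
  have h : ∀ p : Polynomial K, σyR K ((Polynomial.C : Polynomial K →+* Rxy K) p)
      = (Polynomial.C : Polynomial K →+* Rxy K) ((1 : RingAut (Polynomial K)) p) :=
    fun p => sigmayR_C p
  have := comm_zpow (1 : RingAut (Polynomial K)) (σyR K)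
    (Polynomial.C : Polynomial K →+* Rxy K) h n p
  simpa using this

lemma iota_injective : Function.Injective (ι₀ K) :=
  IsFractionRing.injective (Rxy K) (Fxy K)

lemma iotax_ne_zero {p : Polynomial K} (hp : p ≠ 0) : ιx₀ K p ≠ 0 := by
  show ι₀ K (Polynomial.C p) ≠ 0
  intro h
  apply hp
  have h2 : ι₀ K (Polynomial.C p) = ι₀ K 0 := by simpa using h
  have := iota_injective (K := K) h2
  simpa using this

end Aux2
section Aux3
open Polynomial Finsupp

variable {K : Type*} [Field K] [CharZero K]

lemma mulA_single_single (p q : ℤ × ℤ) (a b : Fxy K) :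
    mulA K (Finsupp.single p a) (Finsupp.single q b)
      = Finsupp.single (p + q) (a * σv K p b) := by
  unfold mulA
  rw [Finsupp.sum_single_index, Finsupp.sum_single_index]
  · simp
  · rw [Finsupp.sum_single_index] <;> simp

lemma mulA_zero_right (L : OpA K) : mulA K L 0 = 0 := by
  unfold mulA
  simp

lemma mulA_add_right (L M M' : OpA K) :
    mulA K L (M + M') = mulA K L M + mulA K L M' := by
  unfold mulA
  rw [← Finsupp.sum_add]
  congr 1
  ext p a
  rw [Finsupp.sum_add_index] <;> simp [mul_add, Finsupp.single_add]

lemma mulA_zero_left (M : OpA K) : mulA K 0 M = 0 := by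
  unfold mulA
  simp

lemma mulA_add_left (L L' M : OpA K) :
    mulA K (L + L') M = mulA K L M + mulA K L' M := by
  unfold mulA
  rw [Finsupp.sum_add_index] <;> simp [add_mul, Finsupp.single_add, Finsupp.sum_add]

lemma iB_add (α β : ℤ) (M M' : OpB K) : ιB K α β (M + M') = ιB K α β M + ιB K α β M' := by
  unfold ιB; exact Finsupp.mapDomain_add

lemma phiB_add (lam μ : ℤ) (L L' : OpA K) :
    φB K lam μ (L + L') = φB K lam μ L + φB K lam μ L' := by
  unfold φB; exact Finsupp.mapDomain_add

lemma odot_add_right (α β lam μ : ℤ) (L : OpA K) (M M' : OpB K) :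
    odot K α β lam μ L (M + M') = odot K α β lam μ L M + odot K α β lam μ L M' := by
  unfold odot
  rw [iB_add, mulA_add_right, phiB_add]

lemma odot_zero_right (α β lam μ : ℤ) (L : OpA K) : odot K α β lam μ L 0 = 0 := by
  unfold odot ιB φB
  rw [Finsupp.mapDomain_zero, mulA_zero_right, Finsupp.mapDomain_zero]

lemma odot_add_left (α β lam μ : ℤ) (L L' : OpA K) (M : OpB K) :
    odot K α β lam μ (L + L') M = odot K α β lam μ L M + odot K α β lam μ L' M := by
  unfold odot
  rw [mulA_add_left, phiB_add]

lemma odot_zero_left (α β lam μ : ℤ) (M : OpB K) : odot K α β lam μ 0 M = 0 := by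
  unfold odot φB
  rw [mulA_zero_left, Finsupp.mapDomain_zero]

/-- `odot` as an additive hom in the second argument. -/
noncomputable def odotHom (α β lam μ : ℤ) (L : OpA K) : OpB K →+ OpB K :=
  AddMonoidHom.mk' (odot K α β lam μ L) (odot_add_right α β lam μ L)

lemma odot_sub_right (α β lam μ : ℤ) (L : OpA K) (M M' : OpB K) :
    odot K α β lam μ L (M - M') = odot K α β lam μ L M - odot K α β lam μ L M' :=
  map_sub (odotHom α β lam μ L) M M'

lemma odot_single_single (α β lam μ : ℤ) (p : ℤ × ℤ) (k : ℤ) (a b : Fxy K) :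
    odot K α β lam μ (Finsupp.single p a) (Finsupp.single k b)
      = Finsupp.single (p.1 * lam + p.2 * μ + k * (α * lam + β * μ)) (a * σv K p b) := by
  unfold odot ιB φB
  rw [Finsupp.mapDomain_single, mulA_single_single, Finsupp.mapDomain_single]
  congr 1
  simp only [Prod.fst_add, Prod.snd_add]
  ring

lemma sigmav_x (ℓ : ℤ) (b : Fxy K) : σv K (ℓ, 0) b = (σxF K ^ ℓ) b := by
  unfold σv
  show (σxF K ^ ℓ * σyF K ^ (0:ℤ)) b = _
  rw [zpow_zero, mul_one]

lemma SyOne_eq : SyOne K = Finsupp.single ((0:ℤ),(1:ℤ)) (1 : Fxy K)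
    + (- Finsupp.single ((0:ℤ),(0:ℤ)) (1 : Fxy K)) := by
  unfold SyOne; rw [sub_eq_add_neg]

lemma odot_neg_left (α β lam μ : ℤ) (L : OpA K) (M : OpB K) :
    odot K α β lam μ (-L) M = - odot K α β lam μ L M := by
  have h := odot_add_left α β lam μ L (-L) M
  rw [add_neg_cancel, odot_zero_left] at h
  exact (neg_eq_of_add_eq_zero_right h.symm).symm

lemma odot_SyOne_single (α β lam μ : ℤ) (hb : α * lam + β * μ = 1) (k : ℤ) (b : Fxy K) :
    odot K α β lam μ (SyOne K) (Finsupp.single k b)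
      = Finsupp.single (k + μ) (σyF K b) - Finsupp.single k b := by
  rw [SyOne_eq, odot_add_left, odot_neg_left, odot_single_single, odot_single_single, hb]
  have h1 : σv K ((0:ℤ),(1:ℤ)) b = σyF K b := by
    unfold σv
    show (σxF K ^ (0:ℤ) * σyF K ^ (1:ℤ)) b = _
    rw [zpow_zero, one_mul, zpow_one]
  have h2 : σv K ((0:ℤ),(0:ℤ)) b = b := by
    unfold σv
    show (σxF K ^ (0:ℤ) * σyF K ^ (0:ℤ)) b = _
    rw [zpow_zero, one_mul, zpow_zero]
    rfl
  rw [h1, h2]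
  have e1 : (0:ℤ) * lam + 1 * μ + k * 1 = k + μ := by ring
  have e2 : (0:ℤ) * lam + 0 * μ + k * 1 = k := by ring
  rw [e1, e2, sub_eq_add_neg]
  simp

end Aux3
section Aux4
open Polynomial Finsupp

variable {K : Type*} [Field K] [CharZero K]

lemma ringaut_zpow_apply {A : Type*} [CommRing A] (σ : RingAut A) (a b : ℤ) (x : A) :
    (σ ^ a) ((σ ^ b) x) = (σ ^ (a + b)) x := by
  rw [zpow_add]
  rfl

lemma red (α β lam μ : ℤ) (hb : α * lam + β * μ = 1) (j : ℤ) (b : Fxy K) :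
    ∀ t : ℤ, ∃ Q : OpB K, (Finsupp.single j b : OpB K)
      = odot K α β lam μ (SyOne K) Q + Finsupp.single (j - t * μ) ((σyF K ^ (-t)) b) := by
  intro t
  induction t using Int.induction_on with
  | zero =>
      refine ⟨0, ?_⟩
      rw [odot_zero_right, zero_add]
      simp only [neg_zero, zpow_zero, zero_mul, sub_zero]
      rfl
  | succ k ih =>
      obtain ⟨Q, hQ⟩ := ih
      refine ⟨Q + Finsupp.single (j - (k+1) * μ) ((σyF K ^ (-(k+1):ℤ)) b), ?_⟩
      rw [odot_add_right, odot_SyOne_single α β lam μ hb]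
      have hstep : σyF K ((σyF K ^ (-(k+1):ℤ)) b) = (σyF K ^ (-(k:ℤ))) b := by
        show (σyF K ^ (1:ℤ)) ((σyF K ^ (-(k+1):ℤ)) b) = _
        rw [ringaut_zpow_apply]
        norm_num
      have e1 : j - ((k:ℤ)+1) * μ + μ = j - (k:ℤ) * μ := by ring
      rw [e1, hstep, hQ]
      abel
  | pred k ih =>
      obtain ⟨Q, hQ⟩ := ih
      refine ⟨Q - Finsupp.single (j - (-k:ℤ) * μ) ((σyF K ^ (-(-k:ℤ))) b), ?_⟩
      rw [odot_sub_right, odot_SyOne_single α β lam μ hb]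
      have hstep : σyF K ((σyF K ^ (-(-k:ℤ))) b) = (σyF K ^ (-(-(k+1):ℤ))) b := by
        show (σyF K ^ (1:ℤ)) ((σyF K ^ (-(-k:ℤ))) b) = _
        rw [ringaut_zpow_apply]
        norm_num
        congr 1
        ring
      have e1 : j - (-k:ℤ) * μ + μ = j - (-((k:ℤ)+1)) * μ := by ring
      rw [hstep, e1, hQ]
      abel

end Aux4
section Aux5
open Polynomial Finsupp

variable {K : Type*} [Field K] [CharZero K]

lemma odot_SyOne_eq_sum (α β lam μ : ℤ) (hb : α * lam + β * μ = 1) (W : OpB K) :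
    odot K α β lam μ (SyOne K) W
      = W.sum fun k b => Finsupp.single (k + μ) (σyF K b) - Finsupp.single k b := by
  have h1 : odot K α β lam μ (SyOne K) W
      = (odotHom α β lam μ (SyOne K)) (W.sum Finsupp.single) := by
    rw [Finsupp.sum_single]
    rfl
  rw [h1, map_finsuppSum]
  exact Finsupp.sum_congr fun k _ => odot_SyOne_single α β lam μ hb k (W k)

lemma odot_SyOne_apply (α β lam μ : ℤ) (hb : α * lam + β * μ = 1) (W : OpB K) (j : ℤ) :
    (odot K α β lam μ (SyOne K) W) j = σyF K (W (j - μ)) - W j := by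
  rw [odot_SyOne_eq_sum α β lam μ hb, Finsupp.sum_apply]
  unfold Finsupp.sum
  simp only [Finsupp.sub_apply, Finsupp.single_apply]
  rw [Finset.sum_sub_distrib]
  congr 1
  · have h2 : ∀ k ∈ W.support, (if k + μ = j then σyF K (W k) else 0)
        = (if k = j - μ then σyF K (W k) else 0) := by
      intro k _
      by_cases h : k + μ = j
      · rw [if_pos h, if_pos (by omega)]
      · rw [if_neg h, if_neg (by omega)]
    rw [Finset.sum_congr rfl h2, Finset.sum_ite_eq' W.support (j - μ) (fun k => σyF K (W k))]
    by_cases h : j - μ ∈ W.support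
    · simp [h]
    · rw [if_neg h]
      rw [Finsupp.notMem_support_iff] at h
      rw [h, map_zero]
  · rw [Finset.sum_ite_eq' W.support j (fun k => W k)]
    by_cases h : j ∈ W.support
    · simp [h]
    · rw [if_neg h]
      rw [Finsupp.notMem_support_iff] at h
      rw [h]

lemma odot_SyOne_support_bounded (α β lam μ : ℤ) (hb : α * lam + β * μ = 1) (hμ : 0 < μ)
    (W : OpB K)
    (hsupp : ∀ j ∈ (odot K α β lam μ (SyOne K) W).support, 0 ≤ j ∧ j < μ) :
    odot K α β lam μ (SyOne K) W = 0 := by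
  rcases eq_or_ne W 0 with h0 | hW
  · rw [h0, odot_zero_right]
  · exfalso
    have hne : W.support.Nonempty := Finsupp.support_nonempty_iff.mpr hW
    set h := W.support.max' hne with hh
    set m := W.support.min' hne with hm
    have hmem_h : h ∈ W.support := W.support.max'_mem hne
    have hmem_m : m ∈ W.support := W.support.min'_mem hne
    have hVh : (odot K α β lam μ (SyOne K) W) (h + μ) = σyF K (W h) := by
      rw [odot_SyOne_apply α β lam μ hb]
      have e : h + μ - μ = h := by ring
      rw [e]
      have : W (h + μ) = 0 := by
        apply Finsupp.notMem_support_iff.mp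
        intro hc
        have := W.support.le_max' _ hc
        omega
      rw [this, sub_zero]
    have hVm : (odot K α β lam μ (SyOne K) W) m = - W m := by
      rw [odot_SyOne_apply α β lam μ hb]
      have : W (m - μ) = 0 := by
        apply Finsupp.notMem_support_iff.mp
        intro hc
        have := W.support.min'_le _ hc
        omega
      rw [this, map_zero, zero_sub]
    have hWh : W h ≠ 0 := Finsupp.mem_support_iff.mp hmem_h
    have hWm : W m ≠ 0 := Finsupp.mem_support_iff.mp hmem_m
    have hh' : h + μ ∈ (odot K α β lam μ (SyOne K) W).support := by
      rw [Finsupp.mem_support_iff, hVh]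
      simpa using hWh
    have hm' : m ∈ (odot K α β lam μ (SyOne K) W).support := by
      rw [Finsupp.mem_support_iff, hVm]
      simpa using hWm
    have h1 := hsupp _ hh'
    have h2 := hsupp _ hm'
    have := W.support.min'_le _ hmem_h
    omega

end Aux5
section Aux6
open Polynomial Finsupp

variable {K : Type*} [Field K] [CharZero K]

lemma lord_le_mem {M : OpB K} {j : ℤ} (hj : j ∈ M.support) : lord K M ≤ j := by
  unfold lord
  have h := Finset.min_le hj
  obtain ⟨b, hb⟩ := Finset.min_of_mem hj
  rw [hb] at h ⊢
  simpa using h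

lemma mem_le_hord {M : OpB K} {j : ℤ} (hj : j ∈ M.support) : j ≤ hord K M := by
  unfold hord
  have h := Finset.le_max hj
  obtain ⟨b, hb⟩ := Finset.max_of_mem hj
  rw [hb] at h ⊢
  simpa using h

lemma phiB_SyOne (lam μ : ℤ) :
    φB K lam μ (SyOne K) = Finsupp.single μ (1 : Fxy K) - Finsupp.single 0 1 := by
  unfold SyOne φB
  have h : ∀ L : OpA K, Finsupp.mapDomain (fun p : ℤ × ℤ => p.1 * lam + p.2 * μ) L
      = Finsupp.mapDomain.addMonoidHom (fun p : ℤ × ℤ => p.1 * lam + p.2 * μ) L := fun _ => rfl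
  rw [h, map_sub, ← h, ← h, Finsupp.mapDomain_single, Finsupp.mapDomain_single]
  norm_num

lemma support_phiB_SyOne (lam μ : ℤ) (hμ : 0 < μ) :
    (φB K lam μ (SyOne K)).support = {0, μ} := by
  rw [phiB_SyOne]
  ext j
  rw [Finsupp.mem_support_iff, Finsupp.sub_apply, Finsupp.single_apply, Finsupp.single_apply]
  rcases eq_or_ne j 0 with h0 | h0
  · subst h0
    rw [if_neg (by omega), if_pos rfl]
    simp
  · rcases eq_or_ne j μ with h1 | h1
    · subst h1
      rw [if_pos rfl, if_neg (by omega)]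
      simp [hμ.ne']
    · rw [if_neg (by omega), if_neg (by omega)]
      simp [h0, h1]

lemma lord_phiB_SyOne (lam μ : ℤ) (hμ : 0 < μ) : lord K (φB K lam μ (SyOne K)) = 0 := by
  unfold lord
  rw [support_phiB_SyOne lam μ hμ]
  have : ({0, μ} : Finset ℤ).min = (0 : ℤ) := by
    apply le_antisymm
    · exact Finset.min_le (by simp)
    · apply Finset.le_min
      intro y hy
      simp at hy
      rcases hy with rfl | rfl
      · exact le_refl _
      · exact_mod_cast hμ.le
  rw [this]
  rfl

lemma hord_phiB_SyOne (lam μ : ℤ) (hμ : 0 < μ) : hord K (φB K lam μ (SyOne K)) = μ := by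
  unfold hord
  rw [support_phiB_SyOne lam μ hμ]
  have : ({0, μ} : Finset ℤ).max = (μ : ℤ) := by
    apply le_antisymm
    · apply Finset.max_le
      intro y hy
      simp at hy
      rcases hy with rfl | rfl
      · exact_mod_cast hμ.le
      · exact le_refl _
    · exact Finset.le_max (by simp)
  rw [this]
  rfl

end Aux6
section Aux7
open Polynomial Finsupp

variable {K : Type*} [Field K] [CharZero K]

lemma degX_zero : degX K 0 = 0 := by simp [degX]

lemma degXY_zero : degXY K 0 = 0 := by simp [degXY]

lemma coeff_natDegree_le_degX (q : Rxy K) (n : ℕ) : (q.coeff n).natDegree ≤ degX K q := by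
  by_cases h : q.coeff n = 0
  · simp [h]
  · exact Finset.le_sup (f := fun n => (q.coeff n).natDegree)
      (Polynomial.mem_support_iff.mpr h)

lemma add_coeff_le_degXY {q : Rxy K} {n : ℕ} (h : q.coeff n ≠ 0) :
    n + (q.coeff n).natDegree ≤ degXY K q :=
  Finset.le_sup (f := fun n => n + (q.coeff n).natDegree) (Polynomial.mem_support_iff.mpr h)

lemma degX_add_le (a b : Rxy K) : degX K (a + b) ≤ max (degX K a) (degX K b) := by
  apply Finset.sup_le
  intro n _
  rw [Polynomial.coeff_add]
  calc (a.coeff n + b.coeff n).natDegree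
      ≤ max (a.coeff n).natDegree (b.coeff n).natDegree := Polynomial.natDegree_add_le _ _
    _ ≤ max (degX K a) (degX K b) :=
        max_le_max (coeff_natDegree_le_degX a n) (coeff_natDegree_le_degX b n)

lemma degXY_add_le (a b : Rxy K) : degXY K (a + b) ≤ max (degXY K a) (degXY K b) := by
  apply Finset.sup_le
  intro n hn
  rw [Polynomial.mem_support_iff, Polynomial.coeff_add] at hn
  rw [Polynomial.coeff_add]
  by_cases ha : a.coeff n = 0
  · have hb : b.coeff n ≠ 0 := by
      intro hb; exact hn (by rw [ha, hb, add_zero])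
    rw [ha, zero_add]
    exact le_max_of_le_right (add_coeff_le_degXY hb)
  · by_cases hb : b.coeff n = 0
    · rw [hb, add_zero]
      exact le_max_of_le_left (add_coeff_le_degXY ha)
    · calc n + (a.coeff n + b.coeff n).natDegree
          ≤ n + max (a.coeff n).natDegree (b.coeff n).natDegree :=
            Nat.add_le_add_left (Polynomial.natDegree_add_le _ _) n
        _ = max (n + (a.coeff n).natDegree) (n + (b.coeff n).natDegree) :=
            (Nat.add_max_add_left _ _ _).symm
        _ ≤ max (degXY K a) (degXY K b) :=
            max_le_max (add_coeff_le_degXY ha) (add_coeff_le_degXY hb)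

lemma D_sum_le {ι : Type*} (D : Rxy K → ℕ) (h0 : D 0 = 0)
    (hadd : ∀ a b : Rxy K, D (a + b) ≤ max (D a) (D b))
    (s : Finset ι) (f : ι → Rxy K) (B : ℕ) (hf : ∀ i ∈ s, D (f i) ≤ B) :
    D (∑ i ∈ s, f i) ≤ B := by
  classical
  induction s using Finset.induction_on with
  | empty => simp [h0]
  | insert a s hnotmem ih =>
      rw [Finset.sum_insert hnotmem]
      calc D (f a + ∑ i ∈ s, f i) ≤ max (D (f a)) (D (∑ i ∈ s, f i)) := hadd _ _
        _ ≤ B := max_le (hf a (Finset.mem_insert_self a s))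
            (ih fun i hi => hf i (Finset.mem_insert_of_mem hi))

lemma aeval_eq_comp {A : Type*} [CommRing A] (s q : Polynomial A) :
    aeval s q = q.comp s := by
  rw [Polynomial.comp, Polynomial.aeval_def, Polynomial.algebraMap_eq]

lemma natDegree_shiftPolyK (q : Polynomial K) : ((shiftPoly K) q).natDegree ≤ q.natDegree := by
  rw [shiftPoly_apply, aeval_eq_comp]
  calc (q.comp (X+1)).natDegree ≤ q.natDegree * (X+1 : Polynomial K).natDegree :=
      Polynomial.natDegree_comp_le
    _ ≤ q.natDegree * 1 := by
      apply Nat.mul_le_mul_left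
      have : (X + 1 : Polynomial K) = X + C 1 := by rw [map_one]
      rw [this, Polynomial.natDegree_X_add_C]
    _ = q.natDegree := Nat.mul_one _

lemma natDegree_shiftPolyK_symm (q : Polynomial K) :
    ((shiftPoly K).symm q).natDegree ≤ q.natDegree := by
  rw [shiftPoly_symm_apply, aeval_eq_comp]
  calc (q.comp (X-1)).natDegree ≤ q.natDegree * (X-1 : Polynomial K).natDegree :=
      Polynomial.natDegree_comp_le
    _ ≤ q.natDegree * 1 := by
      apply Nat.mul_le_mul_left
      have : (X - 1 : Polynomial K) = X - C 1 := by rw [map_one]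
      rw [this, Polynomial.natDegree_X_sub_C]
    _ = q.natDegree := Nat.mul_one _

/-- Degree bounds for `map e` on `K[x][y]` when `e` does not increase `natDegree`. -/
lemma degX_map_le (e : Polynomial K →+* Polynomial K)
    (he : ∀ a, (e a).natDegree ≤ a.natDegree) (q : Rxy K) :
    degX K (q.map e) ≤ degX K q := by
  apply Finset.sup_le
  intro n _
  rw [Polynomial.coeff_map]
  exact le_trans (he _) (coeff_natDegree_le_degX q n)

lemma natDegree_map_le' (e : Polynomial K →+* Polynomial K) (q : Rxy K) :
    (q.map e).natDegree ≤ q.natDegree := Polynomial.natDegree_map_le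

lemma degXY_map_le (e : Polynomial K →+* Polynomial K)
    (he : ∀ a, (e a).natDegree ≤ a.natDegree) (q : Rxy K) :
    degXY K (q.map e) ≤ degXY K q := by
  apply Finset.sup_le
  intro n hn
  rw [Polynomial.mem_support_iff, Polynomial.coeff_map] at hn
  have hq : q.coeff n ≠ 0 := by
    intro h; exact hn (by rw [h, map_zero])
  rw [Polynomial.coeff_map]
  calc n + ((e (q.coeff n)).natDegree) ≤ n + (q.coeff n).natDegree :=
      Nat.add_le_add_left (he _) n
    _ ≤ degXY K q := add_coeff_le_degXY hq

/-- Degree bounds for `q.comp (map C w)` with `natDegree w ≤ 1`. -/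
lemma natDegree_compC_le (w : Polynomial K) (hw : w.natDegree ≤ 1) (q : Rxy K) :
    (q.comp (Polynomial.map Polynomial.C w)).natDegree ≤ q.natDegree := by
  calc (q.comp _).natDegree ≤ q.natDegree * (Polynomial.map Polynomial.C w).natDegree :=
      Polynomial.natDegree_comp_le
    _ ≤ q.natDegree * 1 := Nat.mul_le_mul_left _ (le_trans Polynomial.natDegree_map_le hw)
    _ = q.natDegree := Nat.mul_one _

lemma degX_compC_le (w : Polynomial K) (q : Rxy K) :
    degX K (q.comp (Polynomial.map Polynomial.C w)) ≤ degX K q := by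
  rw [Polynomial.comp, Polynomial.eval₂_eq_sum]
  unfold Polynomial.sum
  apply D_sum_le (degX K) degX_zero degX_add_le
  intro m hm
  beta_reduce
  apply Finset.sup_le
  intro n _
  rw [← Polynomial.map_pow, Polynomial.coeff_C_mul, Polynomial.coeff_map]
  calc (q.coeff m * Polynomial.C ((w^m).coeff n)).natDegree
      ≤ (q.coeff m).natDegree + (Polynomial.C ((w^m).coeff n) : Polynomial K).natDegree :=
        Polynomial.natDegree_mul_le
    _ = (q.coeff m).natDegree := by rw [Polynomial.natDegree_C, Nat.add_zero]
    _ ≤ degX K q := coeff_natDegree_le_degX q m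

lemma degXY_compC_le (w : Polynomial K) (hw : w.natDegree ≤ 1) (q : Rxy K) :
    degXY K (q.comp (Polynomial.map Polynomial.C w)) ≤ degXY K q := by
  rw [Polynomial.comp, Polynomial.eval₂_eq_sum]
  unfold Polynomial.sum
  apply D_sum_le (degXY K) degXY_zero degXY_add_le
  intro m hm
  beta_reduce
  apply Finset.sup_le
  intro n hn
  have hterm : (Polynomial.C (q.coeff m) * (Polynomial.map Polynomial.C w)^m).natDegree ≤ m := by
    calc (Polynomial.C (q.coeff m) * (Polynomial.map Polynomial.C w)^m).natDegree
        ≤ (Polynomial.C (q.coeff m) : Rxy K).natDegree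
          + ((Polynomial.map Polynomial.C w)^m).natDegree := Polynomial.natDegree_mul_le
      _ ≤ 0 + m * (Polynomial.map Polynomial.C w).natDegree := by
          rw [Polynomial.natDegree_C]
          exact Nat.add_le_add_left Polynomial.natDegree_pow_le 0
      _ ≤ 0 + m * 1 := Nat.add_le_add_left
          (Nat.mul_le_mul_left _ (le_trans Polynomial.natDegree_map_le hw)) 0
      _ = m := by omega
  have hnm : n ≤ m := le_trans (Polynomial.le_natDegree_of_mem_supp n hn) hterm
  have hqm : q.coeff m ≠ 0 := Polynomial.mem_support_iff.mp hm
  rw [← Polynomial.map_pow, Polynomial.coeff_C_mul, Polynomial.coeff_map]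
  calc n + (q.coeff m * Polynomial.C ((w^m).coeff n)).natDegree
      ≤ n + (q.coeff m).natDegree := by
        apply Nat.add_le_add_left
        calc (q.coeff m * Polynomial.C ((w^m).coeff n)).natDegree
            ≤ (q.coeff m).natDegree + (Polynomial.C ((w^m).coeff n) : Polynomial K).natDegree :=
              Polynomial.natDegree_mul_le
          _ = (q.coeff m).natDegree := by rw [Polynomial.natDegree_C, Nat.add_zero]
    _ ≤ m + (q.coeff m).natDegree := Nat.add_le_add_right hnm _
    _ ≤ degXY K q := add_coeff_le_degXY hqm

end Aux7
section Aux8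
open Polynomial Finsupp

variable {K : Type*} [Field K] [CharZero K]

lemma sigmayR_apply (q : Rxy K) : σyR K q = q.comp (X + 1 : Rxy K) := by
  show shiftPoly (Polynomial K) q = _
  rw [shiftPoly_apply, aeval_eq_comp]

lemma sigmayR_inv_apply (q : Rxy K) : (σyR K)⁻¹ q = q.comp (X - 1 : Rxy K) := by
  show (shiftPoly (Polynomial K)).symm q = _
  rw [shiftPoly_symm_apply, aeval_eq_comp]

lemma sigmaxR_apply (q : Rxy K) :
    σxR K q = q.map ((shiftPoly K : Polynomial K ≃ₐ[K] Polynomial K) : Polynomial K →+* Polynomial K) := by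
  rfl

lemma sigmaxR_inv_apply (q : Rxy K) :
    (σxR K)⁻¹ q = q.map (((shiftPoly K).symm : Polynomial K ≃ₐ[K] Polynomial K) : Polynomial K →+* Polynomial K) := by
  rfl

lemma D_zpow_le (D : Rxy K → ℕ) (σ : RingAut (Rxy K))
    (h : ∀ q, D (σ q) ≤ D q) (h' : ∀ q, D (σ⁻¹ q) ≤ D q) :
    ∀ (n : ℤ) (q : Rxy K), D ((σ ^ n) q) ≤ D q := by
  intro n
  induction n using Int.induction_on with
  | zero => intro q; exact le_of_eq rfl
  | succ k ih =>
      intro q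
      have : (σ ^ ((k:ℤ)+1)) q = (σ ^ (k:ℤ)) (σ q) := by
        rw [← ringaut_zpow_apply σ (k:ℤ) 1 q, zpow_one]
      rw [this]
      exact le_trans (ih (σ q)) (h q)
  | pred k ih =>
      intro q
      have : (σ ^ (-(k:ℤ)-1)) q = (σ ^ (-(k:ℤ))) (σ⁻¹ q) := by
        have e : -(k:ℤ) - 1 = -(k:ℤ) + (-1) := by ring
        rw [e, ← ringaut_zpow_apply σ (-(k:ℤ)) (-1) q, zpow_neg_one]
      rw [this]
      exact le_trans (ih (σ⁻¹ q)) (h' q)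

lemma hw1 : (X + 1 : Polynomial K).natDegree ≤ 1 := by
  have : (X + 1 : Polynomial K) = X + C 1 := by rw [map_one]
  rw [this, Polynomial.natDegree_X_add_C]

lemma hw2 : (X - 1 : Polynomial K).natDegree ≤ 1 := by
  have : (X - 1 : Polynomial K) = X - C 1 := by rw [map_one]
  rw [this, Polynomial.natDegree_X_sub_C]

lemma comp_y_shift (q : Rxy K) : σyR K q
    = q.comp (Polynomial.map Polynomial.C (X + 1 : Polynomial K)) := by
  rw [sigmayR_apply]
  congr 1
  rw [Polynomial.map_add, Polynomial.map_X, Polynomial.map_one]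

lemma comp_y_shift_inv (q : Rxy K) : (σyR K)⁻¹ q
    = q.comp (Polynomial.map Polynomial.C (X - 1 : Polynomial K)) := by
  rw [sigmayR_inv_apply]
  congr 1
  rw [Polynomial.map_sub, Polynomial.map_X, Polynomial.map_one]

lemma degX_sigmayR_zpow (n : ℤ) (q : Rxy K) : degX K ((σyR K ^ n) q) ≤ degX K q := by
  apply D_zpow_le (degX K) (σyR K)
  · intro q; rw [comp_y_shift]; exact degX_compC_le _ q
  · intro q; rw [comp_y_shift_inv]; exact degX_compC_le _ q

lemma natDegree_sigmayR_zpow (n : ℤ) (q : Rxy K) : ((σyR K ^ n) q).natDegree ≤ q.natDegree := by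
  apply D_zpow_le (Polynomial.natDegree) (σyR K)
  · intro q; rw [comp_y_shift]; exact natDegree_compC_le _ hw1 q
  · intro q; rw [comp_y_shift_inv]; exact natDegree_compC_le _ hw2 q

lemma degXY_sigmayR_zpow (n : ℤ) (q : Rxy K) : degXY K ((σyR K ^ n) q) ≤ degXY K q := by
  apply D_zpow_le (degXY K) (σyR K)
  · intro q; rw [comp_y_shift]; exact degXY_compC_le _ hw1 q
  · intro q; rw [comp_y_shift_inv]; exact degXY_compC_le _ hw2 q

lemma degX_sigmaxR_zpow (n : ℤ) (q : Rxy K) : degX K ((σxR K ^ n) q) ≤ degX K q := by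
  apply D_zpow_le (degX K) (σxR K)
  · intro q; rw [sigmaxR_apply]; exact degX_map_le _ (fun a => natDegree_shiftPolyK a) q
  · intro q; rw [sigmaxR_inv_apply]; exact degX_map_le _ (fun a => natDegree_shiftPolyK_symm a) q

lemma natDegree_sigmaxR_zpow (n : ℤ) (q : Rxy K) : ((σxR K ^ n) q).natDegree ≤ q.natDegree := by
  apply D_zpow_le (Polynomial.natDegree) (σxR K)
  · intro q; rw [sigmaxR_apply]; exact natDegree_map_le' _ q
  · intro q; rw [sigmaxR_inv_apply]; exact natDegree_map_le' _ q

lemma degXY_sigmaxR_zpow (n : ℤ) (q : Rxy K) : degXY K ((σxR K ^ n) q) ≤ degXY K q := by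
  apply D_zpow_le (degXY K) (σxR K)
  · intro q; rw [sigmaxR_apply]; exact degXY_map_le _ (fun a => natDegree_shiftPolyK a) q
  · intro q; rw [sigmaxR_inv_apply]; exact degXY_map_le _ (fun a => natDegree_shiftPolyK_symm a) q

end Aux8
section Aux9
open Polynomial Finsupp

variable {K : Type*} [Field K] [CharZero K]

lemma odot_finset_sum_left {ι : Type*} (α β lam μ : ℤ) (s : Finset ι) (F : ι → OpA K)
    (M : OpB K) :
    odot K α β lam μ (∑ i ∈ s, F i) M = ∑ i ∈ s, odot K α β lam μ (F i) M := by
  classical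
  induction s using Finset.induction_on with
  | empty => simp [odot_zero_left]
  | insert a s hnm ih =>
      rw [Finset.sum_insert hnm, Finset.sum_insert hnm, odot_add_left, ih]

lemma sum_red {ι : Type*} (α β lam μ : ℤ) (s : Finset ι) (F G : ι → OpB K)
    (h : ∀ i ∈ s, ∃ q, F i = odot K α β lam μ (SyOne K) q + G i) :
    ∃ q, ∑ i ∈ s, F i = odot K α β lam μ (SyOne K) q + ∑ i ∈ s, G i := by
  classical
  induction s using Finset.induction_on with
  | empty => exact ⟨0, by simp [odot_zero_right]⟩
  | insert a s hnm ih =>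
      obtain ⟨q1, hq1⟩ := h a (Finset.mem_insert_self a s)
      obtain ⟨q2, hq2⟩ := ih fun i hi => h i (Finset.mem_insert_of_mem hi)
      refine ⟨q1 + q2, ?_⟩
      rw [Finset.sum_insert hnm, Finset.sum_insert hnm, hq1, hq2, odot_add_right]
      abel

end Aux9

/-- Lemma `LEM:systemdeg`.
Let `r = Σ_i Σ_k M_{ik}(1/p_i(λ_i x + μ_i y)^k)` be as in Theorem `THM:criterion`, let
`u ∈ K[x]` be the common denominator of the `M_{ik}` with `M_{ik} = (1/u) M̃_{ik}`,
`M̃_{ik} ∈ K[x,y,S_{λ_i,μ_i}]`, and let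
`L = Σ_{ℓ=0}^{ρ} c_ℓ σ_x^ℓ(u) S_x^ℓ ∈ K[x][S_x]`.  Then for each pair `(i,k)` the left
scalar remainder `R_{ik}` of `L ⊙ M_{ik}` by `S_y − 1` can be written as
`R_{ik} = c_ρ R̃_{ikρ} + ⋯ + c_0 R̃_{ik0}` with `R̃_{ikℓ} ∈ K[x,y,S_{λ_i,μ_i}]`,
`deg_x(R̃_{ikℓ}) ≤ deg_x(M̃_{ik})`, `deg_y(R̃_{ikℓ}) ≤ deg_y(M̃_{ik})`, and the total
degree in `(x,y)` of `R̃_{ikℓ}` at most that of `M̃_{ik}`. -/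
theorem statement13 (K : Type*) [Field K] [CharZero K]
    (m : ℕ) (d : Fin m → ℕ) (hd : ∀ i, 0 < d i)
    (lam μ α β : Fin m → ℤ)
    (hμ : ∀ i, 0 < μ i) (hcop : ∀ i, IsCoprime (lam i) (μ i))
    (hbez : ∀ i, α i * lam i + β i * μ i = 1)
    (hα : ∀ i, 0 ≤ α i ∧ α i < μ i)
    (hβ : ∀ i, lam i ≠ 0 → |β i| ≤ |lam i|)
    (hβ0 : ∀ i, lam i = 0 → α i = 0 ∧ β i = 1)
    (p : Fin m → Polynomial K) (hp : ∀ i, (p i).Monic) (hpirr : ∀ i, Irreducible (p i))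
    (M : (i : Fin m) → Fin (d i) → OpB K)
    (hMcoeff : ∀ i k, ∀ l : ℤ, ∃ (aa : Rxy K) (uu : Polynomial K), uu ≠ 0 ∧
        M i k l = ι₀ K aa / ιx₀ K uu ∧ aa.degree < (p i).degree)
    (hMpoly : ∀ i k, ∀ l : ℤ, l < 0 → M i k l = 0)
    (hineq : ∀ i j : Fin m, i ≠ j → ∀ s t : ℤ,
        peR K (lam i) (μ i) (p i) ≠ (σxR K ^ s * σyR K ^ t) (peR K (lam j) (μ j) (p j)))
    -- the common denominator `u` and the numerator operators `M̃_{ik}`: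
    (u : Polynomial K) (hu : u ≠ 0)
    (Mt : (i : Fin m) → Fin (d i) → OpR K)
    (hMt : ∀ i k, ∀ l : ℤ, M i k l = ι₀ K (Mt i k l) / ιx₀ K u)
    -- the ansatz `L = Σ_{ℓ=0}^{ρ} c_ℓ σ_x^ℓ(u) S_x^ℓ`:
    (ρ : ℕ) (c : ℕ → Polynomial K) (L : OpA K)
    (hL : L = ∑ ℓ ∈ Finset.range (ρ + 1),
        Finsupp.single ((ℓ : ℤ), (0 : ℤ)) (ιx₀ K (c ℓ * (σxK K ^ ℓ) u))) :
    ∀ (i : Fin m) (k : Fin (d i)) (Rik : OpB K),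
      (∃ Q : OpB K,
        odot K (α i) (β i) (lam i) (μ i) L (M i k) =
            odot K (α i) (β i) (lam i) (μ i) (SyOne K) Q + Rik ∧
          (Rik = 0 ∨
            (lord K (φB K (lam i) (μ i) (SyOne K)) ≤ lord K Rik ∧
              lord K Rik ≤ hord K Rik ∧
              hord K Rik < hord K (φB K (lam i) (μ i) (SyOne K))))) →
      ∃ Rt : ℕ → OpR K,
        (∀ ℓ, ℓ ≤ ρ →
          (∀ l : ℤ, l < 0 → Rt ℓ l = 0) ∧
          degXOp K (Rt ℓ) ≤ degXOp K (Mt i k) ∧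
          degYOp K (Rt ℓ) ≤ degYOp K (Mt i k) ∧
          degXYOp K (Rt ℓ) ≤ degXYOp K (Mt i k)) ∧
        Rik = ∑ ℓ ∈ Finset.range (ρ + 1), toOpB K (Polynomial.C (c ℓ) • Rt ℓ) := by
  classical
  intro i k Rik hyp
  obtain ⟨Q, hQeq, hQbd⟩ := hyp
  have hb : α i * lam i + β i * μ i = 1 := hbez i
  have hμi : 0 < μ i := hμ i
  have hμne : μ i ≠ 0 := hμi.ne'
  -- the candidate numerator operators
  set Rt : ℕ → OpR K := fun ℓ => (Mt i k).sum fun l a =>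
    Finsupp.single (((ℓ:ℤ) * lam i + l) % μ i)
      ((σyR K ^ (-(((ℓ:ℤ) * lam i + l) / μ i))) ((σxR K ^ (ℓ:ℤ)) a)) with hRt
  have hRtapp : ∀ (ℓ : ℕ) (j : ℤ), Rt ℓ j
      = ∑ l ∈ (Mt i k).support, (if ((ℓ:ℤ) * lam i + l) % μ i = j then
          ((σyR K ^ (-(((ℓ:ℤ) * lam i + l) / μ i))) ((σxR K ^ (ℓ:ℤ)) (Mt i k l))) else 0) := by
    intro ℓ j
    rw [hRt]
    rw [Finsupp.sum_apply]
    unfold Finsupp.sum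
    apply Finset.sum_congr rfl
    intro l _
    beta_reduce
    rw [Finsupp.single_apply]
  refine ⟨Rt, ?_, ?_⟩
  · -- degree bounds
    intro ℓ _
    refine ⟨?_, ?_, ?_, ?_⟩
    · intro l hl
      rw [hRtapp]
      apply Finset.sum_eq_zero
      intro l' _
      rw [if_neg]
      have := Int.emod_nonneg ((ℓ:ℤ) * lam i + l') hμne
      omega
    · unfold degXOp
      apply Finset.sup_le
      intro j _
      rw [hRtapp]
      apply D_sum_le (degX K) degX_zero degX_add_le
      intro l hl
      by_cases hc : ((ℓ:ℤ) * lam i + l) % μ i = j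
      · rw [if_pos hc]
        calc degX K ((σyR K ^ (-(((ℓ:ℤ) * lam i + l) / μ i))) ((σxR K ^ (ℓ:ℤ)) (Mt i k l)))
            ≤ degX K ((σxR K ^ (ℓ:ℤ)) (Mt i k l)) := degX_sigmayR_zpow _ _
          _ ≤ degX K (Mt i k l) := degX_sigmaxR_zpow _ _
          _ ≤ (Mt i k).support.sup fun l => degX K (Mt i k l) := Finset.le_sup (f := fun l => degX K (Mt i k l)) hl
      · rw [if_neg hc]
        simp [degX_zero]
    · unfold degYOp
      apply Finset.sup_le
      intro j _
      rw [hRtapp]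
      apply D_sum_le (Polynomial.natDegree) Polynomial.natDegree_zero
        (fun a b => Polynomial.natDegree_add_le a b)
      intro l hl
      by_cases hc : ((ℓ:ℤ) * lam i + l) % μ i = j
      · rw [if_pos hc]
        calc ((σyR K ^ (-(((ℓ:ℤ) * lam i + l) / μ i))) ((σxR K ^ (ℓ:ℤ)) (Mt i k l))).natDegree
            ≤ ((σxR K ^ (ℓ:ℤ)) (Mt i k l)).natDegree := natDegree_sigmayR_zpow _ _
          _ ≤ (Mt i k l).natDegree := natDegree_sigmaxR_zpow _ _
          _ ≤ (Mt i k).support.sup fun l => (Mt i k l).natDegree := Finset.le_sup (f := fun l => (Mt i k l).natDegree) hl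
      · rw [if_neg hc]
        simp
    · unfold degXYOp
      apply Finset.sup_le
      intro j _
      rw [hRtapp]
      apply D_sum_le (degXY K) degXY_zero degXY_add_le
      intro l hl
      by_cases hc : ((ℓ:ℤ) * lam i + l) % μ i = j
      · rw [if_pos hc]
        calc degXY K ((σyR K ^ (-(((ℓ:ℤ) * lam i + l) / μ i))) ((σxR K ^ (ℓ:ℤ)) (Mt i k l)))
            ≤ degXY K ((σxR K ^ (ℓ:ℤ)) (Mt i k l)) := degXY_sigmayR_zpow _ _
          _ ≤ degXY K (Mt i k l) := degXY_sigmaxR_zpow _ _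
          _ ≤ (Mt i k).support.sup fun l => degXY K (Mt i k l) := Finset.le_sup (f := fun l => degXY K (Mt i k l)) hl
      · rw [if_neg hc]
        simp [degXY_zero]
  · -- the remainder identity
    set cF : ℕ → Fxy K := fun ℓ => ιx₀ K (c ℓ * (σxK K ^ ℓ) u) with hcF
    have hM : M i k = (Mt i k).sum fun l a => Finsupp.single l (ι₀ K a * (ιx₀ K u)⁻¹) := by
      ext j
      rw [Finsupp.sum_apply]
      unfold Finsupp.sum
      have hterms : ∀ l ∈ (Mt i k).support,
          (fun a₁ (b : Rxy K) => (Finsupp.single a₁ (ι₀ K b * (ιx₀ K u)⁻¹) : OpB K) j) l (Mt i k l)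
          = if l = j then ι₀ K (Mt i k l) * (ιx₀ K u)⁻¹ else 0 := by
        intro l _
        beta_reduce
        rw [Finsupp.single_apply]
      rw [Finset.sum_congr rfl hterms,
        Finset.sum_ite_eq' (Mt i k).support j (fun l => ι₀ K (Mt i k l) * (ιx₀ K u)⁻¹)]
      by_cases hj : j ∈ (Mt i k).support
      · rw [if_pos hj, hMt i k j, div_eq_mul_inv]
      · rw [if_neg hj, hMt i k j, Finsupp.notMem_support_iff.mp hj, map_zero, zero_div]
    have hodot_sum : ∀ (Lop : OpA K) (N : OpR K) (g : ℤ → Rxy K → OpB K),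
        odot K (α i) (β i) (lam i) (μ i) Lop (N.sum g)
          = N.sum fun l a => odot K (α i) (β i) (lam i) (μ i) Lop (g l a) :=
      fun Lop N g => map_finsuppSum (odotHom (α i) (β i) (lam i) (μ i) Lop) N g
    have hexpand : odot K (α i) (β i) (lam i) (μ i) L (M i k)
        = ∑ ℓ ∈ Finset.range (ρ+1), (Mt i k).sum fun l a =>
            Finsupp.single ((ℓ:ℤ) * lam i + l)
              (cF ℓ * (σxF K ^ ((ℓ:ℕ):ℤ)) (ι₀ K a * (ιx₀ K u)⁻¹)) := by
      rw [hL, odot_finset_sum_left]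
      apply Finset.sum_congr rfl
      intro ℓ _
      rw [hM, hodot_sum]
      apply Finsupp.sum_congr
      intro l _
      rw [odot_single_single, hb, sigmav_x]
      have e1 : ((ℓ:ℤ),(0:ℤ)).1 * lam i + ((ℓ:ℤ),(0:ℤ)).2 * μ i + l * 1 = (ℓ:ℤ) * lam i + l := by
        simp
      rw [e1]
    have hu2 : ∀ ℓ : ℕ, (σxK K ^ ((ℓ:ℕ):ℤ)) u ≠ 0 := by
      intro ℓ h
      exact hu ((σxK K ^ ((ℓ:ℕ):ℤ)).injective (by rw [h, map_zero]))
    have hcoeff : ∀ (ℓ:ℕ) (l t : ℤ),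
        (σyF K ^ (-t)) (cF ℓ * (σxF K ^ ((ℓ:ℕ):ℤ)) (ι₀ K (Mt i k l) * (ιx₀ K u)⁻¹))
          = ι₀ K (Polynomial.C (c ℓ) * (σyR K ^ (-t)) ((σxR K ^ ((ℓ:ℕ):ℤ)) (Mt i k l))) := by
      intro ℓ l t
      have step1 : (σxF K ^ ((ℓ:ℕ):ℤ)) (ι₀ K (Mt i k l) * (ιx₀ K u)⁻¹)
          = ι₀ K ((σxR K ^ ((ℓ:ℕ):ℤ)) (Mt i k l)) * (ιx₀ K ((σxK K ^ ((ℓ:ℕ):ℤ)) u))⁻¹ := by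
        rw [map_mul, map_inv₀, sigmaxF_zpow_iota, sigmaxF_zpow_iotax]
      have step2 : cF ℓ = ιx₀ K (c ℓ) * ιx₀ K ((σxK K ^ ((ℓ:ℕ):ℤ)) u) := by
        rw [hcF]
        beta_reduce
        rw [map_mul, zpow_natCast]
      rw [step1, step2]
      have step3 : ιx₀ K (c ℓ) * ιx₀ K ((σxK K ^ ((ℓ:ℕ):ℤ)) u)
            * (ι₀ K ((σxR K ^ ((ℓ:ℕ):ℤ)) (Mt i k l)) * (ιx₀ K ((σxK K ^ ((ℓ:ℕ):ℤ)) u))⁻¹)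
          = ιx₀ K (c ℓ) * ι₀ K ((σxR K ^ ((ℓ:ℕ):ℤ)) (Mt i k l)) := by
        have hv : ιx₀ K ((σxK K ^ ((ℓ:ℕ):ℤ)) u) ≠ 0 := iotax_ne_zero (hu2 ℓ)
        rw [← mul_assoc,
          mul_right_comm (ιx₀ K (c ℓ)) (ιx₀ K ((σxK K ^ ((ℓ:ℕ):ℤ)) u)),
          mul_assoc, mul_inv_cancel₀ hv, mul_one]
      rw [step3, map_mul, sigmayF_zpow_iotax, sigmayF_zpow_iota]
      show ι₀ K (Polynomial.C (c ℓ)) * ι₀ K _ = _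
      rw [← map_mul]
    have hred : ∀ ℓ ∈ Finset.range (ρ+1), ∃ q,
        ((Mt i k).sum fun l a => Finsupp.single ((ℓ:ℤ) * lam i + l)
            (cF ℓ * (σxF K ^ ((ℓ:ℕ):ℤ)) (ι₀ K a * (ιx₀ K u)⁻¹)))
          = odot K (α i) (β i) (lam i) (μ i) (SyOne K) q
            + (Mt i k).sum fun l a => Finsupp.single (((ℓ:ℤ) * lam i + l) % μ i)
                (ι₀ K (Polynomial.C (c ℓ)
                  * (σyR K ^ (-(((ℓ:ℤ) * lam i + l) / μ i))) ((σxR K ^ ((ℓ:ℕ):ℤ)) a))) := by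
      intro ℓ _
      unfold Finsupp.sum
      apply sum_red
      intro l hl
      obtain ⟨q, hq⟩ := red (α i) (β i) (lam i) (μ i) hb ((ℓ:ℤ) * lam i + l)
        (cF ℓ * (σxF K ^ ((ℓ:ℕ):ℤ)) (ι₀ K (Mt i k l) * (ιx₀ K u)⁻¹))
        (((ℓ:ℤ) * lam i + l) / μ i)
      refine ⟨q, ?_⟩
      beta_reduce
      rw [hq]
      congr 1
      have e2 : (ℓ:ℤ) * lam i + l - (((ℓ:ℤ) * lam i + l) / μ i) * μ i
          = ((ℓ:ℤ) * lam i + l) % μ i := by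
        rw [Int.emod_def]
        ring
      rw [e2, hcoeff]
    obtain ⟨Qb, hQb⟩ := sum_red (α i) (β i) (lam i) (μ i) (Finset.range (ρ+1)) _ _ hred
    set R' : OpB K := ∑ ℓ ∈ Finset.range (ρ+1),
        (Mt i k).sum fun l a => Finsupp.single (((ℓ:ℤ) * lam i + l) % μ i)
          (ι₀ K (Polynomial.C (c ℓ)
            * (σyR K ^ (-(((ℓ:ℤ) * lam i + l) / μ i))) ((σxR K ^ ((ℓ:ℕ):ℤ)) a))) with hR'
    have hbig : odot K (α i) (β i) (lam i) (μ i) L (M i k)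
        = odot K (α i) (β i) (lam i) (μ i) (SyOne K) Qb + R' := by
      rw [hexpand, hQb]
    -- R' agrees with the claimed sum
    have hA : R' = ∑ ℓ ∈ Finset.range (ρ + 1), toOpB K (Polynomial.C (c ℓ) • Rt ℓ) := by
      rw [hR']
      apply Finset.sum_congr rfl
      intro ℓ _
      ext j
      have hL2 : (toOpB K (Polynomial.C (c ℓ) • Rt ℓ)) j
          = ι₀ K (Polynomial.C (c ℓ) * Rt ℓ j) := by
        rw [toOpB, Finsupp.mapRange_apply, Finsupp.smul_apply, smul_eq_mul]
      rw [hL2, hRtapp, Finset.mul_sum, map_sum, Finsupp.sum_apply]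
      unfold Finsupp.sum
      apply Finset.sum_congr rfl
      intro l _
      beta_reduce
      rw [Finsupp.single_apply, mul_ite, mul_zero, apply_ite (ι₀ K), map_zero]
    -- support bounds
    have hR'supp : ∀ j : ℤ, ¬(0 ≤ j ∧ j < μ i) → R' j = 0 := by
      intro j hj
      rw [hR', Finset.sum_apply']
      apply Finset.sum_eq_zero
      intro ℓ _
      rw [Finsupp.sum_apply]
      unfold Finsupp.sum
      apply Finset.sum_eq_zero
      intro l _
      beta_reduce
      rw [Finsupp.single_apply, if_neg]
      have h1 := Int.emod_nonneg ((ℓ:ℤ) * lam i + l) hμne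
      have h2 := Int.emod_lt_of_pos ((ℓ:ℤ) * lam i + l) hμi
      omega
    have hRiksupp : ∀ j : ℤ, Rik j ≠ 0 → 0 ≤ j ∧ j < μ i := by
      intro j hj
      rcases hQbd with h0 | ⟨h1, h2, h3⟩
      · rw [h0] at hj
        simp at hj
      · have hmem : j ∈ Rik.support := Finsupp.mem_support_iff.mpr hj
        have hle := lord_le_mem hmem
        have hge := mem_le_hord hmem
        rw [lord_phiB_SyOne (lam i) (μ i) hμi] at h1
        rw [hord_phiB_SyOne (lam i) (μ i) hμi] at h3
        omega
    have h2eq : odot K (α i) (β i) (lam i) (μ i) (SyOne K) Q + Rik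
        = odot K (α i) (β i) (lam i) (μ i) (SyOne K) Qb + R' := by
      rw [← hQeq, ← hbig]
    have h3 : odot K (α i) (β i) (lam i) (μ i) (SyOne K) (Q - Qb) = R' - Rik := by
      rw [odot_sub_right]
      have h4 : odot K (α i) (β i) (lam i) (μ i) (SyOne K) Q
          = odot K (α i) (β i) (lam i) (μ i) (SyOne K) Qb + R' - Rik := by
        rw [← h2eq]
        abel
      rw [h4]
      abel
    have hz := odot_SyOne_support_bounded (α i) (β i) (lam i) (μ i) hb hμi (Q - Qb) ?_
    · rw [h3] at hz
      have : Rik = R' := by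
        have := sub_eq_zero.mp hz
        exact this.symm
      rw [this, hA]
    · intro j hj
      rw [h3] at hj
      rw [Finsupp.mem_support_iff, Finsupp.sub_apply] at hj
      by_contra hc
      apply hj
      rw [hR'supp j hc]
      have : Rik j = 0 := by
        by_contra hc2
        exact hc (hRiksupp j hc2)
      rw [this, sub_zero]
end

section
/- Let r ∈ K(x,y) be a rational function of the form r = Σ_{i=1}^{m} Σ_{k=1}^{d_i} M_{ik}(1/p_i(λ_i x + μ_i y)^k) as in the context. Let u ∈ K[x] be the common denominator of the M_{ik} and write each M_{ik} = (1/u) M̃_{ik} with M̃_{ik} ∈ K[x, y, S_{λ_i,μ_i}]. For each pair (i,k) define α_{ik} = max{−1, total degree of M̃_{ik} in (x,y)} and β_{ik} = max{−1, deg_y(M̃_{ik})}, and let ρ_0 = Σ_{i=1}^{m} Σ_{k=1}^{d_i} μ_i(β_{ik} + 1). Then for every pair (ρ,τ) of nonnegative integers with ρ ≥ ρ_0 and τ > deg_x(u) − 1 + (Σ_{i=1}^{m} Σ_{k=1}^{d_i} μ_i(α_{ik} − β_{ik}/2)(β_{ik} + 1))/(ρ + 1 − ρ_0), there exists a telescoper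 for r of order at most ρ and degree at most τ. -/
open Polynomial BigOperators

open scoped Classical

/-! ### Auxiliary machinery for the proof -/

noncomputable section AuxProof

open Polynomial

variable {K : Type*} [Field K] [CharZero K]

section RingAutLemmas

variable {R : Type*} [Semiring R]

lemma ringAut_mul_apply (f g : RingAut R) (x : R) : (f * g) x = f (g x) := rfl

lemma ringAut_one_apply (x : R) : (1 : RingAut R) x = x := rfl

lemma ringAut_inv_apply (f : RingAut R) (x : R) : (f⁻¹) x = f.symm x := rfl

lemma ringAut_pow_succ_apply (f : RingAut R) (n : ℕ) (x : R) :
    (f ^ (n + 1)) x = (f ^ n) (f x) := by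
  rw [pow_succ, ringAut_mul_apply]

lemma ringAut_pow_fix (f : RingAut R) (x : R) (h : f x = x) :
    ∀ n : ℕ, (f ^ n) x = x := by
  intro n
  induction n with
  | zero => simp [ringAut_one_apply]
  | succ n ih => rw [ringAut_pow_succ_apply, h, ih]

lemma ringAut_inv_fix (f : RingAut R) (x : R) (h : f x = x) : f⁻¹ x = x := by
  conv_lhs => rw [← h]
  exact f.symm_apply_apply x

lemma ringAut_zpow_fix (f : RingAut R) (x : R) (h : f x = x) (t : ℤ) :
    (f ^ t) x = x := by
  cases t with
  | ofNat n => rw [Int.ofNat_eq_coe, zpow_natCast]; exact ringAut_pow_fix f x h n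
  | negSucc n =>
      rw [zpow_negSucc, ← inv_pow]
      exact ringAut_pow_fix f⁻¹ x (ringAut_inv_fix f x h) (n + 1)

/-- Predicate preservation under integer powers of a ring automorphism. -/
lemma ringAut_zpow_pred (f : RingAut R) (P : R → Prop)
    (h : ∀ z, P z → P (f z)) (h' : ∀ z, P z → P (f⁻¹ z)) (t : ℤ) {z : R} (hz : P z) :
    P ((f ^ t) z) := by
  have hn : ∀ (g : RingAut R), (∀ w, P w → P (g w)) → ∀ (n : ℕ) (w : R), P w → P ((g ^ n) w) := by
    intro g hg n
    induction n with
    | zero => intro w hw; simpa using hw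
    | succ n ih => intro w hw; rw [ringAut_pow_succ_apply]; exact ih _ (hg _ hw)
  cases t with
  | ofNat n => rw [Int.ofNat_eq_coe, zpow_natCast]; exact hn f h n z hz
  | negSucc n => rw [zpow_negSucc, ← inv_pow]; exact hn f⁻¹ h' (n + 1) z hz

/-- Compatibility of integer powers of ring automorphisms through a ring homomorphism. -/
lemma ringAut_zpow_comm_hom {S : Type*} [Semiring S] (F : RingAut S) (G : RingAut R)
    (ι : R →+* S) (h : ∀ z, F (ι z) = ι (G z)) (t : ℤ) (z : R) :
    (F ^ t) (ι z) = ι ((G ^ t) z) := by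
  have hn : ∀ (F' : RingAut S) (G' : RingAut R), (∀ w, F' (ι w) = ι (G' w)) →
      ∀ (n : ℕ) (w : R), (F' ^ n) (ι w) = ι ((G' ^ n) w) := by
    intro F' G' h' n
    induction n with
    | zero => intro w; simp [ringAut_one_apply]
    | succ n ih => intro w; rw [ringAut_pow_succ_apply, ringAut_pow_succ_apply, h', ih]
  have hinv : ∀ w, F⁻¹ (ι w) = ι (G⁻¹ w) := by
    intro w
    have := h (G⁻¹ w)
    rw [ringAut_inv_apply, G.apply_symm_apply] at this
    rw [ringAut_inv_apply, ← this, ringAut_inv_apply, F.symm_apply_apply]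
  cases t with
  | ofNat n =>
      rw [Int.ofNat_eq_coe, zpow_natCast, zpow_natCast]; exact hn F G h n z
  | negSucc n =>
      rw [zpow_negSucc, zpow_negSucc, ← inv_pow, ← inv_pow]; exact hn F⁻¹ G⁻¹ hinv (n + 1) z

end RingAutLemmas

section ShiftOne

variable {R : Type*} [Ring R]

lemma ringAut_pow_shift_one (f : RingAut R) (v : R) (h : f v = v + 1) (n : ℕ) :
    (f ^ n) v = v + (n : R) := by
  induction n with
  | zero => simp [ringAut_one_apply]
  | succ n ih =>
      rw [ringAut_pow_succ_apply, h, map_add, map_one, ih]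
      push_cast
      abel

lemma ringAut_zpow_shift_one (f : RingAut R) (v : R) (h : f v = v + 1) (t : ℤ) :
    (f ^ t) v = v + (t : R) := by
  have hinv : f⁻¹ v = v + (-1 : R) := by
    apply f.injective
    rw [← ringAut_mul_apply, mul_inv_cancel, ringAut_one_apply, map_add, h]
    simp
  have hinvn : ∀ n : ℕ, (f⁻¹ ^ n) v = v + (-(n : ℤ) : R) := by
    intro n
    induction n with
    | zero => simp [ringAut_one_apply]
    | succ n ih =>
        rw [ringAut_pow_succ_apply, hinv, map_add, ih]
        simp only [map_neg, map_one]
        push_cast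
        abel
  cases t with
  | ofNat n =>
      rw [Int.ofNat_eq_coe, zpow_natCast, ringAut_pow_shift_one f v h n]
      push_cast; abel
  | negSucc n =>
      rw [zpow_negSucc, ← inv_pow, hinvn (n + 1)]
      rw [Int.negSucc_eq]
      push_cast; abel

end ShiftOne

end AuxProof
noncomputable section AuxProof2

open Polynomial

set_option linter.unusedSectionVars false

variable {K : Type*} [Field K] [CharZero K]

/-! #### Shift automorphisms on polynomial rings: explicit descriptions -/

lemma σxK_apply (q : Polynomial K) : σxK K q = taylor 1 q := by
  show (aeval (X + 1) : Polynomial K →ₐ[K] Polynomial K) q = taylor 1 q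
  rw [taylor_apply, aeval_def, ← C_1, comp, Polynomial.algebraMap_eq]

lemma σxK_inv_apply (q : Polynomial K) : (σxK K)⁻¹ q = taylor (-1) q := by
  show (aeval (X - 1) : Polynomial K →ₐ[K] Polynomial K) q = taylor (-1) q
  rw [taylor_apply, aeval_def, map_neg, C_1, sub_eq_add_neg, comp, Polynomial.algebraMap_eq]

lemma σxK_natDegree (q : Polynomial K) : (σxK K q).natDegree = q.natDegree := by
  rw [σxK_apply, natDegree_taylor]

lemma σxK_inv_natDegree (q : Polynomial K) : ((σxK K)⁻¹ q).natDegree = q.natDegree := by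
  rw [σxK_inv_apply, natDegree_taylor]

lemma σxK_pow_natDegree (n : ℕ) (q : Polynomial K) :
    ((σxK K ^ n) q).natDegree = q.natDegree := by
  induction n generalizing q with
  | zero => simp [ringAut_one_apply]
  | succ n ih => rw [ringAut_pow_succ_apply, ih, σxK_natDegree]

lemma σxK_C (a : K) : σxK K (C a) = C a := by
  rw [σxK_apply, taylor_apply, C_comp]

lemma σxK_X : σxK K X = X + 1 := by
  rw [σxK_apply, taylor_apply, X_comp, C_1]

lemma σxR_apply (n : Rxy K) : σxR K n = n.map (σxK K) := rfl

lemma σxR_C (q : Polynomial K) : σxR K (C q) = C (σxK K q) := by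
  rw [σxR_apply, map_C]
  rfl

lemma σxR_X : σxR K X = X := by
  rw [σxR_apply, map_X]

lemma σyR_apply (n : Rxy K) : σyR K n = n.comp (X + 1) := by
  show (aeval (X + 1) : Rxy K →ₐ[Polynomial K] Rxy K) n = n.comp (X + 1)
  rw [aeval_def, comp, Polynomial.algebraMap_eq]

lemma σyR_inv_apply (n : Rxy K) : (σyR K)⁻¹ n = n.comp (X - 1) := by
  show (aeval (X - 1) : Rxy K →ₐ[Polynomial K] Rxy K) n = n.comp (X - 1)
  rw [aeval_def, comp, Polynomial.algebraMap_eq]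

lemma σyR_C (q : Polynomial K) : σyR K (C q) = C q := by
  rw [σyR_apply, C_comp]

lemma σyR_X : σyR K X = X + 1 := by
  rw [σyR_apply, X_comp]

lemma σxR_inv_apply (n : Rxy K) :
    (σxR K)⁻¹ n = n.map (((σxK K)⁻¹ : RingAut (Polynomial K)) : Polynomial K →+* Polynomial K) := by
  apply (σxR K).injective
  rw [ringAut_inv_apply, (σxR K).apply_symm_apply, σxR_apply, map_map]
  have hcomp : ((σxK K : RingAut (Polynomial K)) : Polynomial K →+* Polynomial K).comp
      (((σxK K)⁻¹ : RingAut (Polynomial K)) : Polynomial K →+* Polynomial K) =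
      RingHom.id (Polynomial K) := by
    apply RingHom.ext
    intro q
    show σxK K (((σxK K)⁻¹ : RingAut (Polynomial K)) q) = q
    rw [ringAut_inv_apply, (σxK K).apply_symm_apply]
  rw [hcomp, map_id]

lemma commR (n : Rxy K) : σxR K (σyR K n) = σyR K (σxR K n) := by
  rw [σyR_apply, σxR_apply, σxR_apply, σyR_apply, map_comp]
  congr 1
  simp

end AuxProof2
noncomputable section AuxProof3

open Polynomial

set_option linter.unusedSectionVars false

variable {K : Type*} [Field K] [CharZero K]

/-! #### Compatibility of the shifts with the fraction field embeddings -/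

lemma σxF_ι (z : Rxy K) : σxF K (ι₀ K z) = ι₀ K (σxR K z) :=
  IsFractionRing.ringEquivOfRingEquiv_algebraMap (σxR K) z

lemma σyF_ι (z : Rxy K) : σyF K (ι₀ K z) = ι₀ K (σyR K z) :=
  IsFractionRing.ringEquivOfRingEquiv_algebraMap (σyR K) z

lemma σxF_zpow_ι (t : ℤ) (z : Rxy K) : (σxF K ^ t) (ι₀ K z) = ι₀ K ((σxR K ^ t) z) :=
  ringAut_zpow_comm_hom (σxF K) (σxR K) (ι₀ K) (σxF_ι) t z

lemma σyF_zpow_ι (t : ℤ) (z : Rxy K) : (σyF K ^ t) (ι₀ K z) = ι₀ K ((σyR K ^ t) z) :=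
  ringAut_zpow_comm_hom (σyF K) (σyR K) (ι₀ K) (σyF_ι) t z

lemma σxR_zpow_C (t : ℤ) (q : Polynomial K) :
    (σxR K ^ t) (C q) = C ((σxK K ^ t) q) :=
  ringAut_zpow_comm_hom (σxR K) (σxK K) (Polynomial.C) (σxR_C) t q

lemma σyR_zpow_C (t : ℤ) (q : Polynomial K) : (σyR K ^ t) (C q) = C q :=
  ringAut_zpow_fix (σyR K) (C q) (σyR_C q) t

lemma σxF_zpow_ιx (t : ℤ) (q : Polynomial K) :
    (σxF K ^ t) (ιx₀ K q) = ιx₀ K ((σxK K ^ t) q) := by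
  show (σxF K ^ t) (ι₀ K (C q)) = ι₀ K (C ((σxK K ^ t) q))
  rw [σxF_zpow_ι, σxR_zpow_C]

lemma σyF_zpow_ιx (t : ℤ) (q : Polynomial K) : (σyF K ^ t) (ιx₀ K q) = ιx₀ K q := by
  show (σyF K ^ t) (ι₀ K (C q)) = ι₀ K (C q)
  rw [σyF_zpow_ι, σyR_zpow_C]

lemma σxF_ιK (a : K) : σxF K (ιK K a) = ιK K a := by
  show σxF K (ι₀ K (C (C a))) = ι₀ K (C (C a))
  rw [σxF_ι, σxR_C, σxK_C]

lemma σyF_ιK (a : K) : σyF K (ιK K a) = ιK K a := by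
  show σyF K (ι₀ K (C (C a))) = ι₀ K (C (C a))
  rw [σyF_ι, σyR_C]

lemma σxF_zpow_ιK (t : ℤ) (a : K) : (σxF K ^ t) (ιK K a) = ιK K a :=
  ringAut_zpow_fix _ _ (σxF_ιK a) t

lemma σyF_zpow_ιK (t : ℤ) (a : K) : (σyF K ^ t) (ιK K a) = ιK K a :=
  ringAut_zpow_fix _ _ (σyF_ιK a) t

/-! #### Commutation of the two shifts -/

lemma commF (z : Fxy K) : σxF K (σyF K z) = σyF K (σxF K z) := by
  have h : ((σxF K : Fxy K →+* Fxy K).comp (σyF K : Fxy K →+* Fxy K)) =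
      ((σyF K : Fxy K →+* Fxy K).comp (σxF K : Fxy K →+* Fxy K)) := by
    apply IsLocalization.ringHom_ext (nonZeroDivisors (Rxy K))
    apply RingHom.ext
    intro z
    show σxF K (σyF K (ι₀ K z)) = σyF K (σxF K (ι₀ K z))
    rw [σyF_ι, σxF_ι, σxF_ι, σyF_ι, commR]
  exact RingHom.congr_fun h z

lemma commuteF : Commute (σxF K) (σyF K) := by
  apply RingEquiv.ext
  intro z
  exact commF z

lemma commuteF_zpow (s t : ℤ) : Commute (σxF K ^ s) (σyF K ^ t) :=
  (commuteF).zpow_zpow s t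

/-! #### Action on `x`, `y` and on `p(λx + μy + c)` -/

lemma σxF_xF : σxF K (xF K) = xF K + 1 := by
  show σxF K (ι₀ K (C X)) = ι₀ K (C X) + 1
  rw [σxF_ι, σxR_C, σxK_X, map_add, map_add, map_one, map_one]

lemma σyF_xF : σyF K (xF K) = xF K := by
  show σyF K (ι₀ K (C X)) = ι₀ K (C X)
  rw [σyF_ι, σyR_C]

lemma σxF_yF : σxF K (yF K) = yF K := by
  show σxF K (ι₀ K X) = ι₀ K X
  rw [σxF_ι, σxR_X]

lemma σyF_yF : σyF K (yF K) = yF K + 1 := by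
  show σyF K (ι₀ K X) = ι₀ K X + 1
  rw [σyF_ι, σyR_X, map_add, map_one]

lemma σxF_zpow_xF (t : ℤ) : (σxF K ^ t) (xF K) = xF K + (t : Fxy K) :=
  ringAut_zpow_shift_one _ _ (σxF_xF) t

lemma σyF_zpow_yF (t : ℤ) : (σyF K ^ t) (yF K) = yF K + (t : Fxy K) :=
  ringAut_zpow_shift_one _ _ (σyF_yF) t

lemma σyF_zpow_xF (t : ℤ) : (σyF K ^ t) (xF K) = xF K :=
  ringAut_zpow_fix _ _ (σyF_xF) t

lemma σxF_zpow_yF (t : ℤ) : (σxF K ^ t) (yF K) = yF K :=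
  ringAut_zpow_fix _ _ (σxF_yF) t

/-- `p(λx + μy + c)` as element of `K(x,y)`. -/
def PEc (lam μ : ℤ) (p : Polynomial K) (c : ℤ) : Fxy K :=
  Polynomial.eval₂ (ιK K) (wF K lam μ + (c : Fxy K)) p

lemma peF_eq_PEc (lam μ : ℤ) (p : Polynomial K) : peF K lam μ p = PEc lam μ p 0 := by
  unfold peF PEc
  norm_num

lemma σ_zpow_wFc (lam μ : ℤ) (s t c : ℤ) :
    (σxF K ^ s) ((σyF K ^ t) (wF K lam μ + (c : Fxy K))) =
      wF K lam μ + ((c + s * lam + t * μ : ℤ) : Fxy K) := by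
  unfold wF
  simp only [map_add, map_mul, map_intCast, σyF_zpow_xF, σyF_zpow_yF, σxF_zpow_xF, σxF_zpow_yF]
  push_cast
  ring

lemma σ_zpow_PEc (lam μ : ℤ) (p : Polynomial K) (s t c : ℤ) :
    (σxF K ^ s) ((σyF K ^ t) (PEc lam μ p c)) = PEc lam μ p (c + s * lam + t * μ) := by
  unfold PEc
  have h1 : ((σyF K ^ t : RingAut (Fxy K)) : Fxy K →+* Fxy K).comp (ιK K) = ιK K := by
    apply RingHom.ext; intro a; exact σyF_zpow_ιK t a
  have h2 : ((σxF K ^ s : RingAut (Fxy K)) : Fxy K →+* Fxy K).comp (ιK K) = ιK K := by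
    apply RingHom.ext; intro a; exact σxF_zpow_ιK s a
  have e1 : (σyF K ^ t) (eval₂ (ιK K) (wF K lam μ + (c : Fxy K)) p)
      = eval₂ (ιK K) ((σyF K ^ t) (wF K lam μ + (c : Fxy K))) p := by
    have h := Polynomial.hom_eval₂ p (ιK K)
      ((σyF K ^ t : RingAut (Fxy K)) : Fxy K →+* Fxy K) (wF K lam μ + (c : Fxy K))
    rw [h1] at h
    exact h
  have e2 : (σxF K ^ s) (eval₂ (ιK K) ((σyF K ^ t) (wF K lam μ + (c : Fxy K))) p)
      = eval₂ (ιK K) ((σxF K ^ s) ((σyF K ^ t) (wF K lam μ + (c : Fxy K)))) p := by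
    have h := Polynomial.hom_eval₂ p (ιK K)
      ((σxF K ^ s : RingAut (Fxy K)) : Fxy K →+* Fxy K)
      ((σyF K ^ t) (wF K lam μ + (c : Fxy K)))
    rw [h2] at h
    exact h
  rw [e1, e2, σ_zpow_wFc]

lemma σxF_zpow_PEc (lam μ : ℤ) (p : Polynomial K) (s c : ℤ) :
    (σxF K ^ s) (PEc lam μ p c) = PEc lam μ p (c + s * lam) := by
  have h := σ_zpow_PEc lam μ p s 0 c
  rw [zpow_zero, ringAut_one_apply] at h
  rw [h]
  congr 1
  ring

lemma σyF_zpow_PEc (lam μ : ℤ) (p : Polynomial K) (t c : ℤ) :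
    (σyF K ^ t) (PEc lam μ p c) = PEc lam μ p (c + t * μ) := by
  have h := σ_zpow_PEc lam μ p 0 t c
  rw [zpow_zero, ringAut_one_apply] at h
  rw [h]
  congr 1
  ring

lemma τF_zpow_PEc (a b lam μ : ℤ) (hbez : a * lam + b * μ = 1) (p : Polynomial K) (l c : ℤ) :
    ((τF K a b) ^ l) (PEc lam μ p c) = PEc lam μ p (c + l) := by
  unfold τF
  rw [(commuteF_zpow a b).mul_zpow, ← zpow_mul, ← zpow_mul, ringAut_mul_apply,
    σ_zpow_PEc]
  congr 1
  have : c + a * l * lam + b * l * μ = c + l * (a * lam + b * μ) := by ring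
  rw [this, hbez, mul_one]

end AuxProof3
noncomputable section AuxProof4

open Polynomial

set_option linter.unusedSectionVars false

variable {K : Type*} [Field K] [CharZero K]

/-! #### Summability toolkit -/

lemma summable_zero' : IsSummableY K 0 := ⟨0, by simp⟩

lemma summable_add {f g : Fxy K} (hf : IsSummableY K f) (hg : IsSummableY K g) :
    IsSummableY K (f + g) := by
  obtain ⟨a, ha⟩ := hf
  obtain ⟨b, hb⟩ := hg
  exact ⟨a + b, by rw [ha, hb, map_add]; ring⟩

lemma summable_neg {f : Fxy K} (hf : IsSummableY K f) : IsSummableY K (-f) := by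
  obtain ⟨a, ha⟩ := hf
  exact ⟨-a, by rw [ha, map_neg]; ring⟩

lemma summable_finsum {ι : Type*} (s : Finset ι) (f : ι → Fxy K)
    (h : ∀ i ∈ s, IsSummableY K (f i)) : IsSummableY K (∑ i ∈ s, f i) := by
  classical
  induction s using Finset.induction_on with
  | empty => simpa using summable_zero' (K := K)
  | insert a s' hnotmem ih =>
      rw [Finset.sum_insert hnotmem]
      exact summable_add (h a (Finset.mem_insert_self a s'))
        (ih fun i hi => h i (Finset.mem_insert_of_mem hi))

lemma summable_sigmaY_zpow (t : ℤ) (f : Fxy K) : IsSummableY K ((σyF K ^ t) f - f) := by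
  have hnat : ∀ (n : ℕ) (g : Fxy K), IsSummableY K ((σyF K ^ n) g - g) := by
    intro n
    induction n with
    | zero => intro g; simpa [ringAut_one_apply] using summable_zero' (K := K)
    | succ n ih =>
        intro g
        have h1 : (σyF K ^ (n + 1)) g - g
            = ((σyF K ^ n) (σyF K g) - (σyF K g)) + (σyF K g - g) := by
          rw [ringAut_pow_succ_apply]; ring
        rw [h1]
        exact summable_add (ih (σyF K g)) ⟨g, rfl⟩
  cases t with
  | ofNat n => rw [Int.ofNat_eq_coe, zpow_natCast]; exact hnat n f
  | negSucc n =>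
      have key : IsSummableY K ((σyF K ^ (n + 1 : ℕ)) ((σyF K ^ (Int.negSucc n)) f)
          - (σyF K ^ (Int.negSucc n)) f) := hnat (n + 1) _
      have h2 : (σyF K ^ (n + 1 : ℕ)) ((σyF K ^ (Int.negSucc n)) f) = f := by
        rw [← ringAut_mul_apply, ← zpow_natCast, ← zpow_add]
        have hz : ((n + 1 : ℕ) : ℤ) + Int.negSucc n = 0 := by
          rw [Int.negSucc_eq]; push_cast; ring
        rw [hz, zpow_zero, ringAut_one_apply]
      rw [h2] at key
      have := summable_neg key
      simpa using this

lemma summable_mul_ιx (q : Polynomial K) {f : Fxy K} (hf : IsSummableY K f) :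
    IsSummableY K (ιx₀ K q * f) := by
  obtain ⟨g, hg⟩ := hf
  refine ⟨ιx₀ K q * g, ?_⟩
  rw [hg, map_mul]
  have : σyF K (ιx₀ K q) = ιx₀ K q := by
    have := σyF_zpow_ιx (K := K) 1 q
    simpa using this
  rw [this]
  ring

lemma summable_sigmaX_zpow (s : ℤ) {f : Fxy K} (hf : IsSummableY K f) :
    IsSummableY K ((σxF K ^ s) f) := by
  obtain ⟨g, hg⟩ := hf
  refine ⟨(σxF K ^ s) g, ?_⟩
  rw [hg, map_sub]
  congr 1
  have hc : Commute (σxF K ^ s) (σyF K) := commuteF.zpow_left s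
  calc (σxF K ^ s) (σyF K g) = ((σxF K ^ s) * σyF K) g := rfl
    _ = (σyF K * (σxF K ^ s)) g := by rw [hc]
    _ = σyF K ((σxF K ^ s) g) := rfl

end AuxProof4
noncomputable section AuxProof5

open Polynomial

set_option linter.unusedSectionVars false

variable {K : Type*} [Field K] [CharZero K]

/-! #### Degree-profile predicate `Psize` -/

/-- `Psize n A B` : every nonzero coefficient of `n` (in `x^a y^b`) has `a + b < A` and
`b < B`. -/
def Psize (n : Rxy K) (A B : ℕ) : Prop :=
  ∀ a b : ℕ, (n.coeff b).coeff a ≠ 0 → a + b < A ∧ b < B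

lemma Psize_zero (A B : ℕ) : Psize (0 : Rxy K) A B := by
  intro a b h
  simp at h

lemma Psize_finsum {ι : Type*} (s : Finset ι) (f : ι → Rxy K) (A B : ℕ)
    (h : ∀ i ∈ s, Psize (f i) A B) : Psize (∑ i ∈ s, f i) A B := by
  intro a b hab
  rw [Polynomial.finset_sum_coeff, Polynomial.finset_sum_coeff] at hab
  obtain ⟨i, hi, hne⟩ := Finset.exists_ne_zero_of_sum_ne_zero hab
  exact h i hi a b hne

lemma Psize_natDegree_coeff {n : Rxy K} {A B b : ℕ} (h : Psize n A B)
    (hb : n.coeff b ≠ 0) : (n.coeff b).natDegree + b < A ∧ b < B :=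
  h (n.coeff b).natDegree b (by
    rw [← Polynomial.leadingCoeff]
    exact Polynomial.leadingCoeff_ne_zero.mpr hb)

lemma Psize_CMul {n : Rxy K} {A B D : ℕ} (q : Polynomial K) (hq : q.natDegree ≤ D)
    (h : Psize n A B) : Psize (C q * n) (D + A) B := by
  intro a b hab
  rw [Polynomial.coeff_C_mul] at hab
  have hprod : q * n.coeff b ≠ 0 := fun hz => hab (by rw [hz, Polynomial.coeff_zero])
  have hnb : n.coeff b ≠ 0 := by
    intro hz; exact hprod (by rw [hz, mul_zero])
  have ha : a ≤ (q * n.coeff b).natDegree := Polynomial.le_natDegree_of_ne_zero hab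
  have hmain := Psize_natDegree_coeff h hnb
  constructor
  · have : a ≤ q.natDegree + (n.coeff b).natDegree :=
      le_trans ha (Polynomial.natDegree_mul_le)
    omega
  · exact hmain.2

/-- `Psize` is preserved by coefficientwise application of a `natDegree`-nonincreasing
injective ring homomorphism. -/
lemma Psize_map {n : Rxy K} {A B : ℕ} (f : Polynomial K →+* Polynomial K)
    (hdeg : ∀ q, (f q).natDegree ≤ q.natDegree) (h : Psize n A B) :
    Psize (n.map f) A B := by
  intro a b hab
  rw [Polynomial.coeff_map] at hab
  have hne : f (n.coeff b) ≠ 0 := fun hz => hab (by rw [hz, Polynomial.coeff_zero])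
  have hnb : n.coeff b ≠ 0 := fun hz => hne (by rw [hz, map_zero])
  have ha : a ≤ (f (n.coeff b)).natDegree := Polynomial.le_natDegree_of_ne_zero hab
  have hmain := Psize_natDegree_coeff h hnb
  have := hdeg (n.coeff b)
  exact ⟨by omega, hmain.2⟩

/-- `Psize` is preserved by `y ↦ y + r₀` substitutions (with scalar `r₀`). -/
lemma Psize_compShift {n : Rxy K} {A B : ℕ} (r₀ : K) (h : Psize n A B) :
    Psize (n.comp (X + C (C r₀))) A B := by
  intro a b hab
  rw [Polynomial.comp, Polynomial.eval₂_eq_sum, Polynomial.sum_def] at hab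
  rw [Polynomial.finset_sum_coeff, Polynomial.finset_sum_coeff] at hab
  obtain ⟨b', hb'supp, hne⟩ := Finset.exists_ne_zero_of_sum_ne_zero hab
  rw [Polynomial.coeff_C_mul] at hne
  -- the coefficient of `y^b` in `(y + r₀)^{b'}` is a scalar
  have hw : (X + C (C r₀) : Rxy K) = Polynomial.map (Polynomial.C : K →+* Polynomial K)
      (X + C r₀) := by
    rw [Polynomial.map_add, Polynomial.map_X, Polynomial.map_C]
  have hwpow : ((X + C (C r₀) : Rxy K) ^ b') =
      Polynomial.map (Polynomial.C : K →+* Polynomial K) ((X + C r₀) ^ b') := by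
    rw [hw, Polynomial.map_pow]
  have hcoeffw : ((X + C (C r₀) : Rxy K) ^ b').coeff b
      = C (((X + C r₀ : Polynomial K) ^ b').coeff b) := by
    rw [hwpow, Polynomial.coeff_map]
  set v : Polynomial K := ((X + C (C r₀) : Rxy K) ^ b').coeff b with hv
  have hvdeg : v.natDegree = 0 := by rw [hcoeffw]; exact Polynomial.natDegree_C _
  have hprod : n.coeff b' * v ≠ 0 := fun hz => hne (by rw [hz, Polynomial.coeff_zero])
  have hnb : n.coeff b' ≠ 0 := fun hz => hprod (by rw [hz, zero_mul])
  have hvne : v ≠ 0 := fun hz => hprod (by rw [hz, mul_zero])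
  -- `b ≤ b'`
  have hble : b ≤ b' := by
    by_contra hlt
    push_neg at hlt
    have hdeg : ((X + C (C r₀) : Rxy K) ^ b').natDegree ≤ b' := by
      refine le_trans (Polynomial.natDegree_pow_le) ?_
      have : (X + C (C r₀) : Rxy K).natDegree ≤ 1 := by
        apply Polynomial.natDegree_add_le_of_degree_le
        · exact Polynomial.natDegree_X_le
        · exact le_trans (Nat.le_of_eq (Polynomial.natDegree_C _)) (by omega)
      calc b' * (X + C (C r₀) : Rxy K).natDegree ≤ b' * 1 := Nat.mul_le_mul_left _ this
        _ = b' := by omega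
    have : v = 0 := Polynomial.coeff_eq_zero_of_natDegree_lt (lt_of_le_of_lt hdeg hlt)
    exact hvne this
  have ha : a ≤ (n.coeff b' * v).natDegree := Polynomial.le_natDegree_of_ne_zero hne
  have hmul : (n.coeff b' * v).natDegree ≤ (n.coeff b').natDegree + v.natDegree :=
    Polynomial.natDegree_mul_le
  have hmain := Psize_natDegree_coeff h hnb
  constructor
  · omega
  · omega

lemma Psize_σxR {n : Rxy K} {A B : ℕ} (h : Psize n A B) : Psize (σxR K n) A B := by
  rw [σxR_apply]
  exact Psize_map _ (fun q => le_of_eq (σxK_natDegree q)) h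

lemma Psize_σxR_inv {n : Rxy K} {A B : ℕ} (h : Psize n A B) : Psize ((σxR K)⁻¹ n) A B := by
  rw [σxR_inv_apply]
  exact Psize_map _ (fun q => le_of_eq (σxK_inv_natDegree q)) h

lemma Psize_σyR {n : Rxy K} {A B : ℕ} (h : Psize n A B) : Psize (σyR K n) A B := by
  rw [σyR_apply]
  have : (X + 1 : Rxy K) = X + C (C (1 : K)) := by simp
  rw [this]
  exact Psize_compShift 1 h

lemma Psize_σyR_inv {n : Rxy K} {A B : ℕ} (h : Psize n A B) : Psize ((σyR K)⁻¹ n) A B := by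
  rw [σyR_inv_apply]
  have : (X - 1 : Rxy K) = X + C (C (-1 : K)) := by
    simp [sub_eq_add_neg]
  rw [this]
  exact Psize_compShift (-1) h

lemma Psize_σxR_zpow {n : Rxy K} {A B : ℕ} (s : ℤ) (h : Psize n A B) :
    Psize ((σxR K ^ s) n) A B :=
  ringAut_zpow_pred (σxR K) (fun z => Psize z A B)
    (fun _ hz => Psize_σxR hz) (fun _ hz => Psize_σxR_inv hz) s h

lemma Psize_σyR_zpow {n : Rxy K} {A B : ℕ} (t : ℤ) (h : Psize n A B) :
    Psize ((σyR K ^ t) n) A B :=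
  ringAut_zpow_pred (σyR K) (fun z => Psize z A B)
    (fun _ hz => Psize_σyR hz) (fun _ hz => Psize_σyR_inv hz) t h

end AuxProof5
noncomputable section AuxProof6

open Polynomial

set_option linter.unusedSectionVars false

variable {K : Type*} [Field K] [CharZero K]

/-! #### Normalising shifts and the key linear expression -/

/-- The `y`-shift applied to the `(ℓ, l)` term to normalise the argument shift. -/
def tsh (lam μ : ℤ) (ℓ : ℕ) (l : ℤ) : ℤ := -((l + (ℓ : ℤ) * lam) / μ)

/-- The normalised shift, i.e. `(l + ℓλ) mod μ`. -/
def ssh (lam μ : ℤ) (ℓ : ℕ) (l : ℤ) : ℤ := (l + (ℓ : ℤ) * lam) % μ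

lemma ssh_nonneg {μ : ℤ} (hμ : 0 < μ) (lam : ℤ) (ℓ : ℕ) (l : ℤ) : 0 ≤ ssh lam μ ℓ l :=
  Int.emod_nonneg _ (ne_of_gt hμ)

lemma ssh_lt {μ : ℤ} (hμ : 0 < μ) (lam : ℤ) (ℓ : ℕ) (l : ℤ) : ssh lam μ ℓ l < μ :=
  Int.emod_lt_of_pos _ hμ

lemma ssh_eq (lam μ : ℤ) (ℓ : ℕ) (l : ℤ) :
    l + (ℓ : ℤ) * lam + tsh lam μ ℓ l * μ = ssh lam μ ℓ l := by
  unfold tsh ssh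
  rw [Int.emod_def]
  ring

/-- The normalising substitution applied to a polynomial in `K[x,y]`. -/
def SHf (lam μ : ℤ) (ℓ : ℕ) (l : ℤ) (z : Rxy K) : Rxy K :=
  (σyR K ^ tsh lam μ ℓ l) ((σxR K ^ (ℓ : ℤ)) z)

lemma Psize_SHf {z : Rxy K} {A B : ℕ} (lam μ : ℤ) (ℓ : ℕ) (l : ℤ) (h : Psize z A B) :
    Psize (SHf lam μ ℓ l z) A B :=
  Psize_σyR_zpow _ (Psize_σxR_zpow _ h)

/-- The grouped coefficient `N_{iks}` as a function of the ansatz coefficients `e`. -/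
def Nfun (lam μ : ℤ) (Mtik : OpR K) (ρ : ℕ) (e : Fin (ρ + 1) → Polynomial K) (s : ℕ) :
    Rxy K :=
  ∑ q ∈ (Finset.univ : Finset (Fin (ρ + 1))) ×ˢ Mtik.support,
    if (ssh lam μ (q.1 : ℕ) q.2).toNat = s then
      C (e q.1) * SHf lam μ (q.1 : ℕ) q.2 (Mtik q.2) else 0

lemma Nfun_add (lam μ : ℤ) (Mtik : OpR K) (ρ : ℕ) (e f : Fin (ρ + 1) → Polynomial K)
    (s : ℕ) : Nfun lam μ Mtik ρ (e + f) s = Nfun lam μ Mtik ρ e s + Nfun lam μ Mtik ρ f s := by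
  unfold Nfun
  rw [← Finset.sum_add_distrib]
  apply Finset.sum_congr rfl
  intro q _
  by_cases hc : (ssh lam μ (q.1 : ℕ) q.2).toNat = s
  · simp only [hc, if_true, Pi.add_apply, map_add, add_mul]
  · simp only [hc, if_false, add_zero]

lemma Nfun_smul (lam μ : ℤ) (Mtik : OpR K) (ρ : ℕ) (c : K)
    (e : Fin (ρ + 1) → Polynomial K) (s : ℕ) :
    Nfun lam μ Mtik ρ (c • e) s = c • Nfun lam μ Mtik ρ e s := by
  unfold Nfun
  rw [Finset.smul_sum]
  apply Finset.sum_congr rfl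
  intro q _
  by_cases hc : (ssh lam μ (q.1 : ℕ) q.2).toNat = s
  · simp only [hc, if_true, Pi.smul_apply]
    rw [Polynomial.smul_eq_C_mul, map_mul, Algebra.smul_def]
    have : algebraMap K (Rxy K) c = C (C c) := by
      rw [Polynomial.algebraMap_apply, Polynomial.algebraMap_eq]
    rw [this, mul_assoc]
  · simp only [hc, if_false, smul_zero]

lemma Psize_Nfun {lam μ : ℤ} {Mtik : OpR K} {ρ : ℕ} {e : Fin (ρ + 1) → Polynomial K}
    {s : ℕ} {A B D : ℕ} (hMt : ∀ l : ℤ, Psize (Mtik l) A B)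
    (he : ∀ ℓ, (e ℓ).natDegree ≤ D) :
    Psize (Nfun lam μ Mtik ρ e s) (D + A) B := by
  apply Psize_finsum
  intro q _
  by_cases hc : (ssh lam μ (q.1 : ℕ) q.2).toNat = s
  · rw [if_pos hc]
    exact Psize_CMul _ (he q.1) (Psize_SHf _ _ _ _ (hMt q.2))
  · rw [if_neg hc]
    exact Psize_zero _ _

/-! #### Degree bookkeeping for the operators `M̃` -/

lemma Psize_of_degOps (N : OpR K) (l : ℤ) :
    Psize (N l) (degXYOp K N + 1) (degYOp K N + 1) := by
  by_cases hNl : N l = 0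
  · rw [hNl]; exact Psize_zero _ _
  intro a b hab
  have hcb : (N l).coeff b ≠ 0 := fun hz => hab (by rw [hz, Polynomial.coeff_zero])
  have ha : a ≤ ((N l).coeff b).natDegree := Polynomial.le_natDegree_of_ne_zero hab
  have hbsup : b ∈ (N l).support := Polynomial.mem_support_iff.mpr hcb
  have hxy : b + ((N l).coeff b).natDegree ≤ degXY K (N l) := by
    unfold degXY
    exact Finset.le_sup (f := fun n => n + ((N l).coeff n).natDegree) hbsup
  have hy : b ≤ (N l).natDegree := Polynomial.le_natDegree_of_ne_zero hcb
  have hlsup : l ∈ N.support := Finsupp.mem_support_iff.mpr hNl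
  have hxyop : degXY K (N l) ≤ degXYOp K N := by
    unfold degXYOp
    exact Finset.le_sup (f := fun l' => degXY K (N l')) hlsup
  have hyop : (N l).natDegree ≤ degYOp K N := by
    unfold degYOp
    exact Finset.le_sup (f := fun l' => (N l').natDegree) hlsup
  constructor
  · omega
  · omega

lemma degYOp_le_degXYOp (N : OpR K) : degYOp K N ≤ degXYOp K N := by
  apply Finset.sup_mono_fun
  intro l hl
  by_cases hz : N l = 0
  · rw [hz]; simp [degXY]
  · have : (N l).natDegree ∈ (N l).support := by
      rw [Polynomial.mem_support_iff]
      rw [← Polynomial.leadingCoeff]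
      exact Polynomial.leadingCoeff_ne_zero.mpr hz
    calc (N l).natDegree ≤ (N l).natDegree + ((N l).coeff (N l).natDegree).natDegree :=
          Nat.le_add_right _ _
      _ ≤ degXY K (N l) := by
          unfold degXY
          exact Finset.le_sup (f := fun n => n + ((N l).coeff n).natDegree) this

end AuxProof6
noncomputable section AuxProof7

open Polynomial

set_option linter.unusedSectionVars false
set_option maxHeartbeats 1000000

variable {K : Type*} [Field K] [CharZero K]

/-! #### Expanding the operator applications -/

lemma applyA_ιxOp (L : ℕ →₀ Polynomial K) (f : Fxy K) :
    applyA K (ιxOp K L) f = L.sum fun n q => ιx₀ K q * (σxF K ^ (n : ℤ)) f := by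
  unfold applyA ιxOp
  rw [Finsupp.sum_sum_index]
  · apply Finsupp.sum_congr
    intro n _
    rw [Finsupp.sum_single_index]
    · have : σv K ((n : ℤ), (0 : ℤ)) f = (σxF K ^ (n : ℤ)) f := by
        unfold σv
        rw [zpow_zero, mul_one]
      rw [this]
    · rw [zero_mul]
  · intro p; rw [zero_mul]
  · intro p b₁ b₂; rw [add_mul]

lemma applyB_expand (a b : ℤ) (Mik : OpB K) (Mtik : OpR K) (u : Polynomial K)
    (hM : ∀ l : ℤ, Mik l = ι₀ K (Mtik l) / ιx₀ K u) (f : Fxy K) :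
    applyB K a b Mik f =
      ∑ l ∈ Mtik.support, ι₀ K (Mtik l) * (ιx₀ K u)⁻¹ * (τF K a b ^ l) f := by
  unfold applyB
  have hsub : Mik.support ⊆ Mtik.support := by
    intro l hl
    rw [Finsupp.mem_support_iff] at hl ⊢
    intro hz
    apply hl
    rw [hM l, hz, map_zero, zero_div]
  rw [Finsupp.sum_of_support_subset Mik hsub _ (fun l _ => by rw [zero_mul])]
  apply Finset.sum_congr rfl
  intro l _
  rw [hM l, div_eq_mul_inv]

/-! #### The index type for the linear system and its cardinality -/

variable (m : ℕ) (d : Fin m → ℕ) (μ : Fin m → ℤ) (ρ D : ℕ)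
  (An Bn : (i : Fin m) → Fin (d i) → ℕ)

/-- Index type enumerating the coefficients of the linear constraints. -/
def IdxT : Type _ :=
  (i : Fin m) × (k : Fin (d i)) ×
    (Fin ((μ i).toNat) × ((b : Fin (Bn i k)) × Fin (D + An i k - (b : ℕ))))

instance : Fintype (IdxT m d μ D An Bn) := by
  unfold IdxT
  infer_instance

lemma card_IdxT :
    Fintype.card (IdxT m d μ D An Bn)
      = ∑ i : Fin m, ∑ k : Fin (d i),
          (μ i).toNat * ∑ b ∈ Finset.range (Bn i k), (D + An i k - b) := by
  unfold IdxT
  rw [Fintype.card_sigma]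
  apply Finset.sum_congr rfl
  intro i _
  rw [Fintype.card_sigma]
  apply Finset.sum_congr rfl
  intro k _
  rw [Fintype.card_prod, Fintype.card_fin, Fintype.card_sigma]
  congr 1
  rw [← Fin.sum_univ_eq_sum_range (fun b => D + An i k - b) (Bn i k)]
  apply Finset.sum_congr rfl
  intro b _
  rw [Fintype.card_fin]

/-- The Gauss-sum evaluation of the inner cardinality, over `ℚ`. -/
lemma inner_sum_cast (Dq A B : ℕ) (hBA : B ≤ A) :
    (∑ b ∈ Finset.range B, ((Dq + A - b : ℕ) : ℚ))
      = (B : ℚ) * ((Dq : ℚ) + 1) +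
        (B : ℚ) * (((A : ℚ) - 1) - ((B : ℚ) - 1) / 2) := by
  rcases Nat.eq_zero_or_pos B with hB | hB
  · subst hB; simp
  have hgauss : ((∑ b ∈ Finset.range B, b : ℕ) : ℚ) = (B : ℚ) * ((B : ℚ) - 1) / 2 := by
    have h2 := Finset.sum_range_id_mul_two B
    have : ((∑ b ∈ Finset.range B, b : ℕ) : ℚ) * 2 = ((B * (B - 1) : ℕ) : ℚ) := by
      exact_mod_cast congrArg (Nat.cast : ℕ → ℚ) h2
    have hc : ((B * (B - 1) : ℕ) : ℚ) = (B : ℚ) * ((B : ℚ) - 1) := by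
      rw [Nat.cast_mul, Nat.cast_sub hB, Nat.cast_one]
    rw [hc] at this
    linarith
  have hterm : ∀ b ∈ Finset.range B, ((Dq + A - b : ℕ) : ℚ) = (Dq : ℚ) + (A : ℚ) - (b : ℚ) := by
    intro b hb
    rw [Finset.mem_range] at hb
    have hble : b ≤ Dq + A := by omega
    rw [Nat.cast_sub hble, Nat.cast_add]
  rw [Finset.sum_congr rfl hterm, Finset.sum_sub_distrib, Finset.sum_const,
    Finset.card_range, ← Nat.cast_sum, hgauss]
  push_cast
  ring

end AuxProof7
noncomputable section AuxProof8

open Polynomial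

set_option linter.unusedSectionVars false
set_option maxHeartbeats 1000000

variable {K : Type*} [Field K] [CharZero K]

variable (m : ℕ) (d : Fin m → ℕ) (lam μ : Fin m → ℤ)
  (Mt : (i : Fin m) → Fin (d i) → OpR K) (ρ D : ℕ)
  (An Bn : (i : Fin m) → Fin (d i) → ℕ)

/-- The linear map recording all relevant coefficients of the `N_{iks}`. -/
def Fmap : (Fin (ρ + 1) → Polynomial.degreeLT K (D + 1)) →ₗ[K]
    (IdxT m d μ D An Bn → K) where
  toFun e idx :=
    ((Nfun (lam idx.1) (μ idx.1) (Mt idx.1 idx.2.1) ρ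
        (fun ℓ => ((e ℓ : Polynomial.degreeLT K (D + 1)) : Polynomial K))
        ((idx.2.2.1 : ℕ))).coeff ((idx.2.2.2.1 : ℕ))).coeff ((idx.2.2.2.2 : ℕ))
  map_add' e f := by
    funext idx
    have hco : (fun ℓ => (((e + f) ℓ : Polynomial.degreeLT K (D + 1)) : Polynomial K))
        = (fun ℓ => ((e ℓ : Polynomial.degreeLT K (D + 1)) : Polynomial K))
          + (fun ℓ => ((f ℓ : Polynomial.degreeLT K (D + 1)) : Polynomial K)) := by
      funext ℓ
      simp
    rw [hco, Nfun_add, Polynomial.coeff_add, Polynomial.coeff_add]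
    rfl
  map_smul' c e := by
    funext idx
    have hco : (fun ℓ => (((c • e) ℓ : Polynomial.degreeLT K (D + 1)) : Polynomial K))
        = c • (fun ℓ => ((e ℓ : Polynomial.degreeLT K (D + 1)) : Polynomial K)) := by
      funext ℓ
      simp
    rw [hco, Nfun_smul, Polynomial.coeff_smul, Polynomial.coeff_smul]
    rfl

lemma Fmap_apply (e : Fin (ρ + 1) → Polynomial.degreeLT K (D + 1))
    (idx : IdxT m d μ D An Bn) :
    Fmap m d lam μ Mt ρ D An Bn e idx =
      ((Nfun (lam idx.1) (μ idx.1) (Mt idx.1 idx.2.1) ρ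
        (fun ℓ => ((e ℓ : Polynomial.degreeLT K (D + 1)) : Polynomial K))
        ((idx.2.2.1 : ℕ))).coeff ((idx.2.2.2.1 : ℕ))).coeff ((idx.2.2.2.2 : ℕ)) := rfl

lemma finrank_degreeLT_poly (n : ℕ) :
    Module.finrank K (Polynomial.degreeLT K n) = n := by
  rw [(Polynomial.degreeLTEquiv K n).finrank_eq, Module.finrank_pi]
  simp

lemma finrank_domain :
    Module.finrank K (Fin (ρ + 1) → Polynomial.degreeLT K (D + 1)) = (ρ + 1) * (D + 1) := by
  haveI : Module.Finite K (Polynomial.degreeLT K (D + 1)) :=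
    Module.Finite.equiv (Polynomial.degreeLTEquiv K (D + 1)).symm
  rw [Module.finrank_pi_fintype]
  simp [finrank_degreeLT_poly]

end AuxProof8

set_option maxHeartbeats 4000000 in
/-- Lemma `LEM:octorderdegree`: order-degree curve for the new
algorithm.  Let `r = Σ_i Σ_k M_{ik}(1/p_i(λ_i x + μ_i y)^k)` as in the context, let
`u` be the common denominator of the `M_{ik}`, `M_{ik} = (1/u) M̃_{ik}`,
`α_{ik} = max{−1, deg_{x,y}(M̃_{ik})}`, `β_{ik} = max{−1, deg_y(M̃_{ik})}` and
`ρ_0 = Σ_i Σ_k μ_i(β_{ik}+1)`.  Then for every pair `(ρ,τ)` of nonnegative integers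
with `ρ ≥ ρ_0` and
`τ > deg_x(u) − 1 + (Σ_i Σ_k μ_i(α_{ik} − β_{ik}/2)(β_{ik}+1))/(ρ + 1 − ρ_0)`,
there exists a telescoper for `r` of order at most `ρ` and degree at most `τ`. -/
theorem statement14 (K : Type*) [Field K] [CharZero K]
    (m : ℕ) (d : Fin m → ℕ) (hd : ∀ i, 0 < d i)
    (lam μ α β : Fin m → ℤ)
    (hμ : ∀ i, 0 < μ i) (hcop : ∀ i, IsCoprime (lam i) (μ i))
    (hbez : ∀ i, α i * lam i + β i * μ i = 1)
    (hα : ∀ i, 0 ≤ α i ∧ α i < μ i)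
    (hβ : ∀ i, lam i ≠ 0 → |β i| ≤ |lam i|)
    (hβ0 : ∀ i, lam i = 0 → α i = 0 ∧ β i = 1)
    (p : Fin m → Polynomial K) (hp : ∀ i, (p i).Monic) (hpirr : ∀ i, Irreducible (p i))
    (M : (i : Fin m) → Fin (d i) → OpB K)
    (hMcoeff : ∀ i k, ∀ l : ℤ, ∃ (aa : Rxy K) (uu : Polynomial K), uu ≠ 0 ∧
        M i k l = ι₀ K aa / ιx₀ K uu ∧ aa.degree < (p i).degree)
    (hMpoly : ∀ i k, ∀ l : ℤ, l < 0 → M i k l = 0)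
    (hineq : ∀ i j : Fin m, i ≠ j → ∀ s t : ℤ,
        peR K (lam i) (μ i) (p i) ≠ (σxR K ^ s * σyR K ^ t) (peR K (lam j) (μ j) (p j)))
    (r : Fxy K)
    (hr : r = ∑ i : Fin m, ∑ k : Fin (d i),
        applyB K (α i) (β i) (M i k) ((peF K (lam i) (μ i) (p i) ^ ((k : ℕ) + 1))⁻¹))
    -- the common denominator `u` and the numerator operators `M̃_{ik}`:
    (u : Polynomial K) (hu : u ≠ 0)
    (Mt : (i : Fin m) → Fin (d i) → OpR K)
    (hMt : ∀ i k, ∀ l : ℤ, M i k l = ι₀ K (Mt i k l) / ιx₀ K u)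
    -- `α_{ik} = max{−1, deg_{x,y}(M̃_{ik})}` and `β_{ik} = max{−1, deg_y(M̃_{ik})}`:
    (αik βik : (i : Fin m) → Fin (d i) → ℤ)
    (hαik : ∀ i k, αik i k = if Mt i k = 0 then -1 else (degXYOp K (Mt i k) : ℤ))
    (hβik : ∀ i k, βik i k = if Mt i k = 0 then -1 else (degYOp K (Mt i k) : ℤ))
    -- `ρ_0 = Σ_i Σ_k μ_i (β_{ik} + 1)`:
    (ρ0 : ℤ) (hρ0 : ρ0 = ∑ i : Fin m, ∑ k : Fin (d i), μ i * (βik i k + 1))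
    (ρ τ : ℕ) (hρ : ρ0 ≤ (ρ : ℤ))
    (hτ : (τ : ℚ) >
        (u.natDegree : ℚ) - 1 +
          (∑ i : Fin m, ∑ k : Fin (d i),
              (μ i : ℚ) * ((αik i k : ℚ) - (βik i k : ℚ) / 2) * ((βik i k : ℚ) + 1)) /
            ((ρ : ℚ) + 1 - (ρ0 : ℚ))) :
    ∃ L : ℕ →₀ Polynomial K,
      IsTelescoper K L r ∧
        (∀ ℓ ∈ L.support, ℓ ≤ ρ) ∧
        (∀ ℓ, (L ℓ).natDegree ≤ τ) := by
  classical
  -- ### Part 1: numeric bookkeeping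
  set Q : ℚ := ∑ i : Fin m, ∑ k : Fin (d i),
      (μ i : ℚ) * ((αik i k : ℚ) - (βik i k : ℚ) / 2) * ((βik i k : ℚ) + 1) with hQdef
  set An : (i : Fin m) → Fin (d i) → ℕ :=
      fun i k => if Mt i k = 0 then 0 else degXYOp K (Mt i k) + 1 with hAn
  set Bn : (i : Fin m) → Fin (d i) → ℕ :=
      fun i k => if Mt i k = 0 then 0 else degYOp K (Mt i k) + 1 with hBn
  have hBA : ∀ i k, Bn i k ≤ An i k := by
    intro i k
    by_cases hz : Mt i k = 0
    · simp [hAn, hBn, hz]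
    · simp only [hAn, hBn, if_neg hz]
      have := degYOp_le_degXYOp (K := K) (Mt i k)
      omega
  have hAcast : ∀ i k, (An i k : ℚ) = (αik i k : ℚ) + 1 := by
    intro i k
    rw [hαik]
    by_cases hz : Mt i k = 0
    · simp [hAn, hz]
    · simp only [hAn, if_neg hz]
      push_cast
      ring
  have hBcast : ∀ i k, (Bn i k : ℚ) = (βik i k : ℚ) + 1 := by
    intro i k
    rw [hβik]
    by_cases hz : Mt i k = 0
    · simp [hBn, hz]
    · simp only [hBn, if_neg hz]
      push_cast
      ring
  have hμQ : ∀ i, (0 : ℚ) < (μ i : ℚ) := fun i => by exact_mod_cast hμ i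
  have hQ0 : (0 : ℚ) ≤ Q := by
    rw [hQdef]
    apply Finset.sum_nonneg
    intro i _
    apply Finset.sum_nonneg
    intro k _
    have hb1 : (βik i k : ℚ) + 1 = (Bn i k : ℚ) := (hBcast i k).symm
    rcases Nat.eq_zero_or_pos (Bn i k) with hB0 | hBpos
    · rw [hb1, hB0]
      simp
    · have hα' : (αik i k : ℚ) = (An i k : ℚ) - 1 := by
        have := hAcast i k; linarith
      have hβ' : (βik i k : ℚ) = (Bn i k : ℚ) - 1 := by
        have := hBcast i k; linarith
      have hBAq : (Bn i k : ℚ) ≤ (An i k : ℚ) := by exact_mod_cast hBA i k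
      have hB1 : (1 : ℚ) ≤ (Bn i k : ℚ) := by exact_mod_cast hBpos
      apply mul_nonneg
      apply mul_nonneg (hμQ i).le
      · rw [hα', hβ']
        linarith
      · rw [hb1]
        positivity
  have hEpos : (0 : ℚ) < (ρ : ℚ) + 1 - (ρ0 : ℚ) := by
    have : (ρ0 : ℚ) ≤ (ρ : ℚ) := by exact_mod_cast hρ
    linarith
  have hτu : u.natDegree ≤ τ := by
    have hQE : (0 : ℚ) ≤ Q / ((ρ : ℚ) + 1 - (ρ0 : ℚ)) := div_nonneg hQ0 hEpos.le
    have : (u.natDegree : ℚ) - 1 < (τ : ℚ) := by linarith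
    have h2 : (u.natDegree : ℚ) < (τ : ℚ) + 1 := by linarith
    have h3 : u.natDegree < τ + 1 := by exact_mod_cast h2
    omega
  set D : ℕ := τ - u.natDegree with hD
  have hDQ : (D : ℚ) = (τ : ℚ) - (u.natDegree : ℚ) := by
    rw [hD]
    rw [Nat.cast_sub hτu]
  have hkey : Q < ((ρ : ℚ) + 1 - (ρ0 : ℚ)) * ((D : ℚ) + 1) := by
    have h1 : Q / ((ρ : ℚ) + 1 - (ρ0 : ℚ)) < (D : ℚ) + 1 := by
      rw [hDQ]; linarith
    calc Q = Q / ((ρ : ℚ) + 1 - (ρ0 : ℚ)) * ((ρ : ℚ) + 1 - (ρ0 : ℚ)) := by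
            field_simp
      _ < ((D : ℚ) + 1) * ((ρ : ℚ) + 1 - (ρ0 : ℚ)) := by
            apply mul_lt_mul_of_pos_right h1 hEpos
      _ = ((ρ : ℚ) + 1 - (ρ0 : ℚ)) * ((D : ℚ) + 1) := by ring
  have hρ0cast : (ρ0 : ℚ) = ∑ i : Fin m, ∑ k : Fin (d i), (μ i : ℚ) * (Bn i k : ℚ) := by
    rw [hρ0]
    push_cast
    apply Finset.sum_congr rfl
    intro i _
    apply Finset.sum_congr rfl
    intro k _
    rw [hBcast]
  have htoNat : ∀ i, (((μ i).toNat : ℚ)) = (μ i : ℚ) := by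
    intro i
    have := Int.toNat_of_nonneg (hμ i).le
    exact_mod_cast congrArg (Int.cast : ℤ → ℚ) this
  -- cardinality of the index type, rationally
  have hcardQ : ((Fintype.card (IdxT m d μ D An Bn) : ℕ) : ℚ)
      = ((D : ℚ) + 1) * (ρ0 : ℚ) + Q := by
    rw [card_IdxT]
    have hstep : ((∑ i : Fin m, ∑ k : Fin (d i),
          (μ i).toNat * ∑ b ∈ Finset.range (Bn i k), (D + An i k - b) : ℕ) : ℚ)
        = ∑ i : Fin m, ∑ k : Fin (d i),
            (((μ i).toNat : ℚ)) * (∑ b ∈ Finset.range (Bn i k), ((D + An i k - b : ℕ) : ℚ)) := by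
      push_cast
      rfl
    rw [hstep]
    have hterm : ∀ i ∈ (Finset.univ : Finset (Fin m)), ∀ k ∈ (Finset.univ : Finset (Fin (d i))),
        (((μ i).toNat : ℚ)) * (∑ b ∈ Finset.range (Bn i k), ((D + An i k - b : ℕ) : ℚ))
          = ((D : ℚ) + 1) * ((μ i : ℚ) * (Bn i k : ℚ))
            + (μ i : ℚ) * ((αik i k : ℚ) - (βik i k : ℚ) / 2) * ((βik i k : ℚ) + 1) := by
      intro i _ k _
      rw [htoNat i, inner_sum_cast D (An i k) (Bn i k) (hBA i k), hAcast, hBcast]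
      ring
    calc (∑ i : Fin m, ∑ k : Fin (d i),
          (((μ i).toNat : ℚ)) * (∑ b ∈ Finset.range (Bn i k), ((D + An i k - b : ℕ) : ℚ)))
        = ∑ i : Fin m, ∑ k : Fin (d i),
            (((D : ℚ) + 1) * ((μ i : ℚ) * (Bn i k : ℚ))
              + (μ i : ℚ) * ((αik i k : ℚ) - (βik i k : ℚ) / 2) * ((βik i k : ℚ) + 1)) := by
          apply Finset.sum_congr rfl
          intro i hi
          apply Finset.sum_congr rfl
          intro k hk
          exact hterm i hi k hk
      _ = ((D : ℚ) + 1) * (ρ0 : ℚ) + Q := by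
          rw [hρ0cast, hQdef, Finset.mul_sum, ← Finset.sum_add_distrib]
          apply Finset.sum_congr rfl
          intro i _
          rw [Finset.mul_sum, ← Finset.sum_add_distrib]
  have hcard : Fintype.card (IdxT m d μ D An Bn) < (ρ + 1) * (D + 1) := by
    have hexp : ((ρ : ℚ) + 1 - (ρ0 : ℚ)) * ((D : ℚ) + 1)
        = ((ρ : ℚ) + 1) * ((D : ℚ) + 1) - (ρ0 : ℚ) * ((D : ℚ) + 1) := by ring
    have h2 : ((Fintype.card (IdxT m d μ D An Bn) : ℕ) : ℚ)
        < (((ρ + 1) * (D + 1) : ℕ) : ℚ) := by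
      rw [hcardQ]
      push_cast
      nlinarith [hkey]
    exact_mod_cast h2
  -- ### Part 2: a nonzero kernel element of the linear system
  haveI : Module.Finite K (Polynomial.degreeLT K (D + 1)) :=
    Module.Finite.equiv (Polynomial.degreeLTEquiv K (D + 1)).symm
  have hNI : ¬ Function.Injective (Fmap m d lam μ Mt ρ D An Bn) := by
    intro hinj
    have h1 := LinearMap.finrank_le_finrank_of_injective hinj
    rw [finrank_domain, Module.finrank_pi] at h1
    omega
  obtain ⟨e1, e2, hFe, hne⟩ := Function.not_injective_iff.mp hNI
  set e : Fin (ρ + 1) → Polynomial.degreeLT K (D + 1) := e1 - e2 with he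
  have heF : Fmap m d lam μ Mt ρ D An Bn e = 0 := by
    rw [he, map_sub, hFe, sub_self]
  have he0 : e ≠ 0 := sub_ne_zero.mpr hne
  set ecoe : Fin (ρ + 1) → Polynomial K :=
    fun ℓ => ((e ℓ : Polynomial.degreeLT K (D + 1)) : Polynomial K) with hecoe
  have hedeg : ∀ ℓ, (ecoe ℓ).natDegree ≤ D := by
    intro ℓ
    have hm := (e ℓ).2
    rw [Polynomial.mem_degreeLT] at hm
    by_cases hz : (ecoe ℓ) = 0
    · rw [hz]; simp
    · have := (Polynomial.natDegree_lt_iff_degree_lt hz).mpr (by exact_mod_cast hm)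
      omega
  have hex : ∃ ℓ0, ecoe ℓ0 ≠ 0 := by
    by_contra hall
    push_neg at hall
    apply he0
    funext ℓ
    have := hall ℓ
    rw [hecoe] at this
    exact Subtype.ext (by simpa using this)
  -- ### Part 3: vanishing of the grouped coefficients
  have hMtP : ∀ i k (l : ℤ), Psize (Mt i k l) (An i k) (Bn i k) := by
    intro i k l
    by_cases hz : Mt i k = 0
    · have : Mt i k l = 0 := by rw [hz]; rfl
      rw [this]
      exact Psize_zero _ _
    · simp only [hAn, hBn, if_neg hz]
      exact Psize_of_degOps (Mt i k) l
  have hNzero : ∀ i k (s : ℕ), s < (μ i).toNat →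
      Nfun (lam i) (μ i) (Mt i k) ρ ecoe s = 0 := by
    intro i k s hs
    have hPsz : Psize (Nfun (lam i) (μ i) (Mt i k) ρ ecoe s) (D + An i k) (Bn i k) :=
      Psize_Nfun (hMtP i k) hedeg
    apply Polynomial.ext
    intro b
    rw [Polynomial.coeff_zero]
    apply Polynomial.ext
    intro a
    rw [Polynomial.coeff_zero]
    by_contra hne'
    obtain ⟨hab, hb⟩ := hPsz a b hne'
    have hble : b ≤ D + An i k := by
      have := hBA i k
      omega
    have ha2 : a < D + An i k - b := by omega
    set idx : IdxT m d μ D An Bn := ⟨i, k, (⟨s, hs⟩, ⟨⟨b, hb⟩, ⟨a, ha2⟩⟩)⟩ with hidx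
    have hc := congrFun heF idx
    rw [Fmap_apply] at hc
    rw [hidx] at hc
    simp only [Pi.zero_apply] at hc
    rw [← hecoe] at hc
    exact hne' hc
  -- ### Part 4: the telescoper candidate
  set cpoly : Fin (ρ + 1) → Polynomial K :=
    fun ℓ => (σxK K ^ (ℓ : ℕ)) u * ecoe ℓ with hcpoly
  set L : ℕ →₀ Polynomial K :=
    Finsupp.onFinset (Finset.range (ρ + 1))
      (fun n => if h : n < ρ + 1 then cpoly ⟨n, h⟩ else 0)
      (fun n hn => by
        rw [Finset.mem_range]
        by_contra hnlt
        exact hn (dif_neg hnlt)) with hLdef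
  have hLapply : ∀ (ℓ : Fin (ρ + 1)), L (ℓ : ℕ) = cpoly ℓ := by
    intro ℓ
    show (if h : (ℓ : ℕ) < ρ + 1 then cpoly ⟨(ℓ : ℕ), h⟩ else 0) = cpoly ℓ
    rw [dif_pos ℓ.isLt]
  have hLsupp : ∀ n ∈ L.support, n ≤ ρ := by
    intro n hn
    have := Finsupp.support_onFinset_subset hn
    rw [Finset.mem_range] at this
    omega
  have hLdeg : ∀ n, (L n).natDegree ≤ τ := by
    intro n
    show (if h : n < ρ + 1 then cpoly ⟨n, h⟩ else 0).natDegree ≤ τ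
    by_cases h : n < ρ + 1
    · rw [dif_pos h, hcpoly]
      refine le_trans (Polynomial.natDegree_mul_le) ?_
      rw [σxK_pow_natDegree]
      have := hedeg ⟨n, h⟩
      omega
    · rw [dif_neg h]
      simp
  have hLne : L ≠ 0 := by
    obtain ⟨ℓ0, hℓ0⟩ := hex
    intro hL0
    have h1 : L (ℓ0 : ℕ) = 0 := by rw [hL0]; rfl
    rw [hLapply ℓ0, hcpoly] at h1
    have h2 : (σxK K ^ ((ℓ0 : ℕ))) u ≠ 0 := by
      intro hz
      exact hu ((σxK K ^ ((ℓ0 : ℕ))).injective (by rw [hz, map_zero]))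
    exact (mul_ne_zero h2 hℓ0) h1
    -- ### Part 5: `L` is a telescoper
  refine ⟨L, ⟨hLne, ?_⟩, hLsupp, hLdeg⟩
  have hLsub : L.support ⊆ Finset.range (ρ + 1) := by
    rw [hLdef]
    exact Finsupp.support_onFinset_subset
  set term0 : (i : Fin m) → Fin (d i) → ℤ → Fxy K :=
    fun i k l => ι₀ K (Mt i k l) * (ιx₀ K u)⁻¹
      * (PEc (lam i) (μ i) (p i) l ^ ((k : ℕ) + 1))⁻¹ with hterm0
  have hr2 : r = ∑ i : Fin m, ∑ k : Fin (d i), ∑ l ∈ (Mt i k).support, term0 i k l := by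
    rw [hr]
    apply Finset.sum_congr rfl
    intro i _
    apply Finset.sum_congr rfl
    intro k _
    rw [applyB_expand (α i) (β i) (M i k) (Mt i k) u (hMt i k)]
    apply Finset.sum_congr rfl
    intro l _
    simp only [hterm0]
    congr 1
    rw [map_inv₀, map_pow, peF_eq_PEc,
      τF_zpow_PEc (α i) (β i) (lam i) (μ i) (hbez i) (p i) l 0, zero_add]
  have hstep1 : applyA K (ιxOp K L) r
      = ∑ ℓ : Fin (ρ + 1), ιx₀ K (cpoly ℓ) * (σxF K ^ ((ℓ : ℕ) : ℤ)) r := by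
    rw [applyA_ιxOp]
    rw [Finsupp.sum_of_support_subset L hLsub _ (fun n _ => by rw [map_zero, zero_mul])]
    rw [← Fin.sum_univ_eq_sum_range (fun n => ιx₀ K (L n) * (σxF K ^ (n : ℤ)) r) (ρ + 1)]
    apply Finset.sum_congr rfl
    intro ℓ _
    rw [hLapply ℓ]
  set TT : Fin (ρ + 1) → (i : Fin m) → Fin (d i) → ℤ → Fxy K :=
    fun ℓ i k l => ιx₀ K (cpoly ℓ) * (σxF K ^ ((ℓ : ℕ) : ℤ)) (term0 i k l) with hTT
  set TT' : Fin (ρ + 1) → (i : Fin m) → Fin (d i) → ℤ → Fxy K :=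
    fun ℓ i k l => ιx₀ K (cpoly ℓ)
      * (σyF K ^ tsh (lam i) (μ i) (ℓ : ℕ) l)
          ((σxF K ^ ((ℓ : ℕ) : ℤ)) (term0 i k l)) with hTT'
  have happly : applyA K (ιxOp K L) r
      = ∑ ℓ : Fin (ρ + 1), ∑ i : Fin m, ∑ k : Fin (d i), ∑ l ∈ (Mt i k).support,
          TT ℓ i k l := by
    rw [hstep1]
    apply Finset.sum_congr rfl
    intro ℓ _
    rw [hr2]
    simp only [map_sum, Finset.mul_sum, hTT]
  have hTTdiff : ∀ (ℓ : Fin (ρ + 1)) i k (l : ℤ),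
      IsSummableY K (TT ℓ i k l - TT' ℓ i k l) := by
    intro ℓ i k l
    have h1 : TT ℓ i k l - TT' ℓ i k l
        = ιx₀ K (cpoly ℓ) * (-((σyF K ^ tsh (lam i) (μ i) (ℓ : ℕ) l)
            ((σxF K ^ ((ℓ : ℕ) : ℤ)) (term0 i k l))
              - (σxF K ^ ((ℓ : ℕ) : ℤ)) (term0 i k l))) := by
      simp only [hTT, hTT']
      ring
    rw [h1]
    exact summable_mul_ιx _ (summable_neg (summable_sigmaY_zpow _ _))
  have hιxinj : Function.Injective (ιx₀ K) := by
    intro a b hab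
    have h1 : ι₀ K (Polynomial.C a) = ι₀ K (Polynomial.C b) := hab
    exact Polynomial.C_injective (IsFractionRing.injective (Rxy K) (Fxy K) h1)
  have hσune : ∀ (ℓ : Fin (ρ + 1)), ιx₀ K ((σxK K ^ ((ℓ : ℕ))) u) ≠ 0 := by
    intro ℓ hz
    have h2 : (σxK K ^ ((ℓ : ℕ))) u = 0 := hιxinj (by rw [hz, map_zero])
    exact hu ((σxK K ^ ((ℓ : ℕ))).injective (by rw [h2, map_zero]))
  have halg : ∀ (aa x y z : Fxy K), aa ≠ 0 → aa * x * (y * aa⁻¹ * z) = x * y * z := by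
    intro aa x y z ha
    have h1 : aa * x * (y * aa⁻¹ * z) = (aa * aa⁻¹) * (x * y * z) := by ring
    rw [h1, mul_inv_cancel₀ ha, one_mul]
  have hTT'val : ∀ (ℓ : Fin (ρ + 1)) i k (l : ℤ), TT' ℓ i k l
      = ι₀ K (Polynomial.C (ecoe ℓ) * SHf (lam i) (μ i) (ℓ : ℕ) l (Mt i k l))
        * (PEc (lam i) (μ i) (p i) (ssh (lam i) (μ i) (ℓ : ℕ) l) ^ ((k : ℕ) + 1))⁻¹ := by
    intro ℓ i k l
    have hx : (σxF K ^ ((ℓ : ℕ) : ℤ)) (term0 i k l)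
        = ι₀ K ((σxR K ^ ((ℓ : ℕ) : ℤ)) (Mt i k l))
          * (ιx₀ K ((σxK K ^ ((ℓ : ℕ) : ℤ)) u))⁻¹
          * (PEc (lam i) (μ i) (p i) (l + ((ℓ : ℕ) : ℤ) * lam i) ^ ((k : ℕ) + 1))⁻¹ := by
      simp only [hterm0]
      rw [map_mul, map_mul, σxF_zpow_ι, map_inv₀, σxF_zpow_ιx, map_inv₀, map_pow,
        σxF_zpow_PEc]
    have hy : (σyF K ^ tsh (lam i) (μ i) (ℓ : ℕ) l)
        ((σxF K ^ ((ℓ : ℕ) : ℤ)) (term0 i k l))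
        = ι₀ K ((σyR K ^ tsh (lam i) (μ i) (ℓ : ℕ) l) ((σxR K ^ ((ℓ : ℕ) : ℤ)) (Mt i k l)))
          * (ιx₀ K ((σxK K ^ ((ℓ : ℕ) : ℤ)) u))⁻¹
          * (PEc (lam i) (μ i) (p i) (ssh (lam i) (μ i) (ℓ : ℕ) l) ^ ((k : ℕ) + 1))⁻¹ := by
      rw [hx, map_mul, map_mul, σyF_zpow_ι, map_inv₀, σyF_zpow_ιx, map_inv₀, map_pow,
        σyF_zpow_PEc, ssh_eq (lam i) (μ i) (ℓ : ℕ) l]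
    simp only [hTT']
    rw [hy]
    have hz0 : cpoly ℓ = (σxK K ^ ((ℓ : ℕ) : ℤ)) u * ecoe ℓ := by
      rw [zpow_natCast]
    rw [hz0, map_mul, map_mul (ι₀ K)]
    have hz2 : ι₀ K (Polynomial.C (ecoe ℓ)) = ιx₀ K (ecoe ℓ) := rfl
    have hz3 : ι₀ K (SHf (lam i) (μ i) (ℓ : ℕ) l (Mt i k l))
        = ι₀ K ((σyR K ^ tsh (lam i) (μ i) (ℓ : ℕ) l) ((σxR K ^ ((ℓ : ℕ) : ℤ)) (Mt i k l))) :=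
      rfl
    rw [hz2, hz3]
    exact halg _ _ _ _ (by rw [zpow_natCast]; exact hσune ℓ)
  have hTT'zero : (∑ ℓ : Fin (ρ + 1), ∑ i : Fin m, ∑ k : Fin (d i),
      ∑ l ∈ (Mt i k).support, TT' ℓ i k l) = 0 := by
    rw [Finset.sum_comm]
    apply Finset.sum_eq_zero
    intro i _
    rw [Finset.sum_comm]
    apply Finset.sum_eq_zero
    intro k _
    rw [← Finset.sum_product']
    have hmaps : ∀ q ∈ (Finset.univ : Finset (Fin (ρ + 1))) ×ˢ (Mt i k).support,
        (ssh (lam i) (μ i) (q.1 : ℕ) q.2).toNat ∈ Finset.range ((μ i).toNat) := by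
      intro q _
      rw [Finset.mem_range]
      have h1 := ssh_nonneg (hμ i) (lam i) (q.1 : ℕ) q.2
      have h2 := ssh_lt (hμ i) (lam i) (q.1 : ℕ) q.2
      omega
    rw [← Finset.sum_fiberwise_of_maps_to hmaps (fun q => TT' q.1 i k q.2)]
    apply Finset.sum_eq_zero
    intro s hs
    rw [Finset.mem_range] at hs
    have hfib : ∀ q ∈ Finset.filter
        (fun q : Fin (ρ + 1) × ℤ => (ssh (lam i) (μ i) (q.1 : ℕ) q.2).toNat = s)
        ((Finset.univ : Finset (Fin (ρ + 1))) ×ˢ (Mt i k).support),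
        TT' q.1 i k q.2
          = ι₀ K (Polynomial.C (ecoe q.1) * SHf (lam i) (μ i) (q.1 : ℕ) q.2 (Mt i k q.2))
            * (PEc (lam i) (μ i) (p i) ((s : ℕ) : ℤ) ^ ((k : ℕ) + 1))⁻¹ := by
      intro q hq
      rw [Finset.mem_filter] at hq
      have hq2 := hq.2
      have h1 := ssh_nonneg (hμ i) (lam i) (q.1 : ℕ) q.2
      have hseq : ssh (lam i) (μ i) (q.1 : ℕ) q.2 = ((s : ℕ) : ℤ) := by omega
      rw [hTT'val, hseq]
    rw [Finset.sum_congr rfl hfib, ← Finset.sum_mul, ← map_sum]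
    have hNf : (∑ q ∈ Finset.filter
        (fun q : Fin (ρ + 1) × ℤ => (ssh (lam i) (μ i) (q.1 : ℕ) q.2).toNat = s)
        ((Finset.univ : Finset (Fin (ρ + 1))) ×ˢ (Mt i k).support),
        Polynomial.C (ecoe q.1) * SHf (lam i) (μ i) (q.1 : ℕ) q.2 (Mt i k q.2))
        = Nfun (lam i) (μ i) (Mt i k) ρ ecoe s := by
      rw [Finset.sum_filter]
      rfl

    rw [hNf, hNzero i k s hs, map_zero, zero_mul]
  rw [happly]
  have h4 : (∑ ℓ : Fin (ρ + 1), ∑ i : Fin m, ∑ k : Fin (d i), ∑ l ∈ (Mt i k).support,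
      (TT ℓ i k l - TT' ℓ i k l))
      = (∑ ℓ : Fin (ρ + 1), ∑ i : Fin m, ∑ k : Fin (d i), ∑ l ∈ (Mt i k).support,
          TT ℓ i k l)
        - (∑ ℓ : Fin (ρ + 1), ∑ i : Fin m, ∑ k : Fin (d i), ∑ l ∈ (Mt i k).support,
          TT' ℓ i k l) := by
    simp only [Finset.sum_sub_distrib]
  have h5 : (∑ ℓ : Fin (ρ + 1), ∑ i : Fin m, ∑ k : Fin (d i), ∑ l ∈ (Mt i k).support,
      TT ℓ i k l)
      = ∑ ℓ : Fin (ρ + 1), ∑ i : Fin m, ∑ k : Fin (d i), ∑ l ∈ (Mt i k).support,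
          (TT ℓ i k l - TT' ℓ i k l) := by
    rw [h4, hTT'zero, sub_zero]
  rw [h5]
  apply summable_finsum
  intro ℓ _
  apply summable_finsum
  intro i _
  apply summable_finsum
  intro k _
  apply summable_finsum
  intro l _
  exact hTTdiff ℓ i k l
end
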